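/- arXiv:2406.02423 — 3 statements merged into one kernel-verified Lean document; each statement's English description precedes it below -/
import Mathlib

section
/- Under the Liouville-type change of variables z = ∫₀ˣ (c−Q(θ))^{−1/2} dθ and Γ(z) = (c−Q(x))^{1/4} ψ(x), one has, for ψ ∈ H²(ℝ), the identity Mψ = (c−Q)^{−1/4} K Γ, where K = −∂_{zz} + q(z) + c − 2κ and q = (3/4)Q'' − 3Q − (1/16)(Q')²/(c−Q) (expressed in the variable z). -/
open MeasureTheory Filter Topology

noncomputable section

/-! ### Function space framework (classical-derivative model of Sobolev spaces) -/

/-- Membership in the Sobolev space `H^k(ℝ)`, modelled via classical derivatives: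
`ψ` is `k` times continuously differentiable and all derivatives up to order `k`
are square integrable. -/
def InHk (k : ℕ) (ψ : ℝ → ℝ) : Prop :=
  ContDiff ℝ k ψ ∧ ∀ j ≤ k, MemLp (iteratedDeriv j ψ) 2 (volume : Measure ℝ)

/-- Membership in `L²(ℝ)`. -/
def InL2 (ψ : ℝ → ℝ) : Prop := MemLp ψ 2 (volume : Measure ℝ)

/-- `ψ` agrees almost everywhere with a function in `H^k(ℝ)`. -/
def InHkAE (k : ℕ) (ψ : ℝ → ℝ) : Prop :=
  ∃ ψ', ψ =ᵐ[(volume : Measure ℝ)] ψ' ∧ InHk k ψ'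

/-- An odd function on `ℝ`. -/
def OddFun (ψ : ℝ → ℝ) : Prop := ∀ x, ψ (-x) = -ψ x

/-- The `L²(ℝ)` norm. -/
def L2norm (f : ℝ → ℝ) : ℝ := (eLpNorm f 2 (volume : Measure ℝ)).toReal

/-- The `H^k(ℝ)` norm. -/
def HkNorm (k : ℕ) (f : ℝ → ℝ) : ℝ :=
  ∑ j ∈ Finset.range (k + 1), (eLpNorm (iteratedDeriv j f) 2 (volume : Measure ℝ)).toReal

/-- The `L²(ℝ)` inner product. -/
def L2inner (f g : ℝ → ℝ) : ℝ := ∫ x : ℝ, f x * g x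

/-! ### The Camassa–Holm solitary wave profile -/

/-- The ODE `-cQ + cQ'' + 2κQ + (3/2)Q² - (1/2)(Q')² - QQ'' = 0` satisfied by the
profile of a solitary travelling wave `u(t,x) = Q(x - ct)` of the Camassa–Holm equation
`(1-∂ₓ²)uₜ + 3uuₓ + 2κuₓ - 2uₓu_{xx} - uu_{xxx} = 0`. -/
def CHWaveODE (κ c : ℝ) (Q : ℝ → ℝ) : Prop :=
  ∀ x : ℝ, -c * Q x + c * iteratedDeriv 2 Q x + 2 * κ * Q x + (3 / 2) * Q x ^ 2
      - (1 / 2) * (deriv Q x) ^ 2 - Q x * iteratedDeriv 2 Q x = 0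

/-- The standing hypotheses on the solitary wave profile `Q` of the Camassa–Holm equation
with speed `c > 2κ`: smooth, even, exponentially decaying together with all derivatives,
satisfying `c - Q > 2κ` pointwise and the profile ODE. -/
structure CHProfile (κ c : ℝ) (Q : ℝ → ℝ) : Prop where
  smooth : ∀ n : ℕ, ContDiff ℝ n Q
  even : ∀ x, Q (-x) = Q x
  decay : ∀ n : ℕ, ∃ C a : ℝ, 0 < a ∧ ∀ x : ℝ, |iteratedDeriv n Q x| ≤ C * Real.exp (-a * |x|)
  ellip : ∀ x, 2 * κ < c - Q x
  ode : CHWaveODE κ c Q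

/-! ### The operators `M`, `L` and the nonlinearity `N` -/

/-- `M = ∂ₓ(Q-c)∂ₓ + Q'' - 3Q + c - 2κ`, i.e.
`Mψ = (Q-c)ψ'' + Q'ψ' + (Q'' - 3Q + c - 2κ)ψ`. -/
def Mop (κ c : ℝ) (Q : ℝ → ℝ) (ψ : ℝ → ℝ) : ℝ → ℝ := fun x =>
  (Q x - c) * iteratedDeriv 2 ψ x + deriv Q x * deriv ψ x
    + (iteratedDeriv 2 Q x - 3 * Q x + c - 2 * κ) * ψ x

/-- `L = -∂ₓ M ∂ₓ`. -/
def Lop (κ c : ℝ) (Q : ℝ → ℝ) (ψ : ℝ → ℝ) : ℝ → ℝ := fun x =>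
  -deriv (Mop κ c Q (deriv ψ)) x

/-- The nonlinearity `N(ψ) = ((1/2)ψ_{xx}² + ψₓψ_{xxx} - (3/2)ψₓ²)ₓ`. -/
def Nop (ψ : ℝ → ℝ) : ℝ → ℝ :=
  deriv fun x => (1 / 2) * (iteratedDeriv 2 ψ x) ^ 2
    + deriv ψ x * iteratedDeriv 3 ψ x - (3 / 2) * (deriv ψ x) ^ 2

/-! ### Spectral notions for (real) operators on `L²(ℝ)` with domain `D` -/

/-- `ψ` is an eigenfunction of `T` (with domain `D`) for the eigenvalue `μ`. -/
def IsEigenfun (T : (ℝ → ℝ) → ℝ → ℝ) (D : (ℝ → ℝ) → Prop) (μ : ℝ) (ψ : ℝ → ℝ) : Prop :=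
  D ψ ∧ ψ ≠ 0 ∧ ∀ x, T ψ x = μ * ψ x

/-- `μ` is an eigenvalue of `T` with domain `D`. -/
def IsEigenvalue (T : (ℝ → ℝ) → ℝ → ℝ) (D : (ℝ → ℝ) → Prop) (μ : ℝ) : Prop :=
  ∃ ψ, IsEigenfun T D μ ψ

/-- `μ` is a simple eigenvalue of `T`: it is an eigenvalue and any two eigenfunctions
are proportional. -/
def IsSimpleEigenvalue (T : (ℝ → ℝ) → ℝ → ℝ) (D : (ℝ → ℝ) → Prop) (μ : ℝ) : Prop :=
  IsEigenvalue T D μ ∧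
    ∀ ψ φ, IsEigenfun T D μ ψ → IsEigenfun T D μ φ → ∃ a : ℝ, ∀ x, φ x = a * ψ x

/-- `μ` belongs to the resolvent set of the operator `T` with domain `D`, regarded as an
operator on the space of functions satisfying `S`: for every right-hand side `f` in `S`
the equation `(T - μ)ψ = f` has a unique solution in `D`, with a bound `‖ψ‖_{L²} ≤ C‖f‖_{L²}`
uniform in `f`. -/
def InResolventOn (T : (ℝ → ℝ) → ℝ → ℝ) (D S : (ℝ → ℝ) → Prop) (μ : ℝ) : Prop :=
  ∃ C > 0, ∀ f, S f →
    (∃ ψ, D ψ ∧ (∀ᵐ x ∂(volume : Measure ℝ), T ψ x - μ * ψ x = f x) ∧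
      L2norm ψ ≤ C * L2norm f) ∧
    ∀ ψ φ, D ψ → D φ → (∀ᵐ x ∂(volume : Measure ℝ), T ψ x - μ * ψ x = f x) →
      (∀ᵐ x ∂(volume : Measure ℝ), T φ x - μ * φ x = f x) → ψ = φ

/-- Domain of `M`: `H²(ℝ)`. -/
def DomM : (ℝ → ℝ) → Prop := InHk 2

/-- Domain of `L`: `H⁴(ℝ)`. -/
def DomL : (ℝ → ℝ) → Prop := InHk 4

/-- Domain of `L` restricted to odd functions: `H⁴_odd(ℝ)`. -/
def DomLodd (ψ : ℝ → ℝ) : Prop := InHk 4 ψ ∧ OddFun ψ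

/-- `L²_odd(ℝ)`. -/
def L2odd (f : ℝ → ℝ) : Prop := InL2 f ∧ OddFun f

/-- `μ` belongs to the essential spectrum of `T` (domain `D`): there is a normalized
singular (Weyl) sequence, weakly null, with `(T - μ)ψₙ → 0` in `L²`. -/
def InEssSpectrum (T : (ℝ → ℝ) → ℝ → ℝ) (D : (ℝ → ℝ) → Prop) (μ : ℝ) : Prop :=
  ∃ ψ : ℕ → ℝ → ℝ, (∀ n, D (ψ n)) ∧ (∀ n, L2norm (ψ n) = 1) ∧
    (∀ f, InL2 f → Tendsto (fun n => L2inner (ψ n) f) atTop (𝓝 0)) ∧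
    Tendsto (fun n => L2norm fun x => T (ψ n) x - μ * ψ n x) atTop (𝓝 0)

/-! ### Complexified setting and the spatial-dynamics block operator `𝓛` -/

/-- Membership in the complex Sobolev space `H^k(ℝ; ℂ)`. -/
def InHkC (k : ℕ) (ψ : ℝ → ℂ) : Prop :=
  ContDiff ℝ k ψ ∧ ∀ j ≤ k, MemLp (iteratedDeriv j ψ) 2 (volume : Measure ℝ)

/-- Membership in `L²(ℝ; ℂ)`. -/
def InL2C (ψ : ℝ → ℂ) : Prop := MemLp ψ 2 (volume : Measure ℝ)

def OddFunC (ψ : ℝ → ℂ) : Prop := ∀ x, ψ (-x) = -ψ x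

def L2normC (f : ℝ → ℂ) : ℝ := (eLpNorm f 2 (volume : Measure ℝ)).toReal

def HkNormC (k : ℕ) (f : ℝ → ℂ) : ℝ :=
  ∑ j ∈ Finset.range (k + 1), (eLpNorm (iteratedDeriv j f) 2 (volume : Measure ℝ)).toReal

/-- The complexification of the operator `M`. -/
def MopC (κ c : ℝ) (Q : ℝ → ℝ) (ψ : ℝ → ℂ) : ℝ → ℂ := fun x =>
  (↑(Q x - c) : ℂ) * iteratedDeriv 2 ψ x + (↑(deriv Q x) : ℂ) * deriv ψ x
    + (↑(iteratedDeriv 2 Q x - 3 * Q x + c - 2 * κ) : ℂ) * ψ x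

/-- The complexification of the operator `L = -∂ₓ M ∂ₓ`. -/
def LopC (κ c : ℝ) (Q : ℝ → ℝ) (ψ : ℝ → ℂ) : ℝ → ℂ := fun x =>
  -deriv (MopC κ c Q (deriv ψ)) x

/-- Elements of the phase space: pairs `W = (W₁, W₂)` of complex-valued functions. -/
abbrev WSpace := (ℝ → ℂ) × (ℝ → ℂ)

/-- `W ∈ X = L²_odd(ℝ) × H²_odd(ℝ)`. -/
def InX (W : WSpace) : Prop :=
  (InL2C W.1 ∧ OddFunC W.1) ∧ (InHkC 2 W.2 ∧ OddFunC W.2)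

/-- `W ∈ Y = H²_odd(ℝ) × H⁴_odd(ℝ)`, the domain of `𝓛`. -/
def InY (W : WSpace) : Prop :=
  (InHkC 2 W.1 ∧ OddFunC W.1) ∧ (InHkC 4 W.2 ∧ OddFunC W.2)

/-- `‖W‖_X = ‖W₁‖_{L²} + ‖W₂‖_{H²}`. -/
def XnormC (W : WSpace) : ℝ := L2normC W.1 + HkNormC 2 W.2

/-- `‖W‖_Y = ‖W₁‖_{H²} + ‖W₂‖_{H⁴}`. -/
def YnormC (W : WSpace) : ℝ := HkNormC 2 W.1 + HkNormC 4 W.2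

/-- `W` solves the resolvent equation `(𝓛 - μ)W = F`, where `𝓛(W₁, W₂) = (L W₂, W₁)`. -/
def SolvesBlock (κ c : ℝ) (Q : ℝ → ℝ) (μ : ℂ) (W F : WSpace) : Prop :=
  (∀ᵐ x ∂(volume : Measure ℝ), LopC κ c Q W.2 x - μ * W.1 x = F.1 x) ∧
  (∀ᵐ x ∂(volume : Measure ℝ), W.1 x - μ * W.2 x = F.2 x)

/-- `μ ∈ ρ(𝓛)`: the resolvent equation is uniquely solvable in `Y` for every `F ∈ X`,
with an `X → X` bound. -/
def InResolventBlock (κ c : ℝ) (Q : ℝ → ℝ) (μ : ℂ) : Prop :=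
  ∃ C > 0, ∀ F, InX F →
    (∃ W, InY W ∧ SolvesBlock κ c Q μ W F ∧ XnormC W ≤ C * XnormC F) ∧
    ∀ W W', InY W → InY W' → SolvesBlock κ c Q μ W F → SolvesBlock κ c Q μ W' F → W = W'

/-- `W` is an eigenvector of the block operator `𝓛(W₁, W₂) = (L W₂, W₁)` for the
eigenvalue `μ`. -/
def IsBlockEigenfun (κ c : ℝ) (Q : ℝ → ℝ) (μ : ℂ) (W : WSpace) : Prop :=
  InY W ∧ W ≠ 0 ∧ (∀ x, LopC κ c Q W.2 x = μ * W.1 x) ∧ ∀ x, W.1 x = μ * W.2 x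

/-- `μ` is an eigenvalue of the block operator `𝓛`. -/
def IsEigenvalueBlock (κ c : ℝ) (Q : ℝ → ℝ) (μ : ℂ) : Prop :=
  ∃ W : WSpace, IsBlockEigenfun κ c Q μ W

/-- `μ ∈ ρ(L)` for the complexified operator `L : H⁴_odd ⊂ L²_odd → L²_odd`. -/
def InResolventLC (κ c : ℝ) (Q : ℝ → ℝ) (μ : ℂ) : Prop :=
  ∃ C > 0, ∀ f : ℝ → ℂ, InL2C f → OddFunC f →
    (∃ ψ, InHkC 4 ψ ∧ OddFunC ψ ∧
      (∀ᵐ x ∂(volume : Measure ℝ), LopC κ c Q ψ x - μ * ψ x = f x) ∧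
      L2normC ψ ≤ C * L2normC f) ∧
    ∀ ψ φ, InHkC 4 ψ ∧ OddFunC ψ → InHkC 4 φ ∧ OddFunC φ →
      (∀ᵐ x ∂(volume : Measure ℝ), LopC κ c Q ψ x - μ * ψ x = f x) →
      (∀ᵐ x ∂(volume : Measure ℝ), LopC κ c Q φ x - μ * φ x = f x) → ψ = φ

/-- `μ` is an eigenvalue of the complexified `L : H⁴_odd ⊂ L²_odd → L²_odd`. -/
def IsEigenvalueLC (κ c : ℝ) (Q : ℝ → ℝ) (μ : ℂ) : Prop :=
  ∃ ψ : ℝ → ℂ, InHkC 4 ψ ∧ OddFunC ψ ∧ ψ ≠ 0 ∧ ∀ x, LopC κ c Q ψ x = μ * ψ x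

/-! ### Real block operator setting (for the reversibility statement) -/

abbrev WSpaceR := (ℝ → ℝ) × (ℝ → ℝ)

/-- `W ∈ Y = H²_odd(ℝ) × H⁴_odd(ℝ)` (real-valued version). -/
def InYR (W : WSpaceR) : Prop :=
  (InHk 2 W.1 ∧ OddFun W.1) ∧ (InHk 4 W.2 ∧ OddFun W.2)

/-- `‖W‖_Y` (real-valued version). -/
def YnormR (W : WSpaceR) : ℝ := HkNorm 2 W.1 + HkNorm 4 W.2

/-- The block operator `𝓛(W₁, W₂) = (L W₂, W₁)` (real-valued version). -/
def blockLR (κ c : ℝ) (Q : ℝ → ℝ) (W : WSpaceR) : WSpaceR := (Lop κ c Q W.2, W.1)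

/-- The nonlinearity `𝓝(W₁, W₂) = (-N(W₂), 0)`. -/
def blockNR (W : WSpaceR) : WSpaceR := (fun x => -Nop W.2 x, 0)

/-- The reverser `S(W₁, W₂) = (-W₁, W₂)`. -/
def Srev (W : WSpaceR) : WSpaceR := (-W.1, W.2)

/-! ### Auxiliary material for the Liouville transform -/

lemma iteratedDeriv_two (f : ℝ → ℝ) : iteratedDeriv 2 f = deriv (deriv f) := by
  rw [show (2 : ℕ) = 1 + 1 from rfl, iteratedDeriv_succ, iteratedDeriv_one]

/-- Chain-rule lemma for the Liouville change of variables: if `z' = w > 0` (strictly)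
and `Φ ∘ z = h` globally, then `Φ` is differentiable at `z x` with derivative `h' x / w x`. -/
lemma liouville_chain (w z : ℝ → ℝ) (hw : ∀ x, 0 < w x)
    (hz : ∀ x, HasStrictDerivAt z (w x) x)
    (Φ h : ℝ → ℝ) (hagree : ∀ y, Φ (z y) = h y)
    (x : ℝ) (h' : ℝ) (hh : HasStrictDerivAt h h' x) :
    HasDerivAt Φ (h' / w x) (z x) := by
  have hw' : w x ≠ 0 := (hw x).ne'
  have hfd := (hz x).hasStrictFDerivAt_equiv hw'
  set zi := (hz x).localInverse z (w x) x hw' with hzidef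
  have hinv : HasStrictDerivAt zi (w x)⁻¹ (z x) := (hz x).to_localInverse hw'
  have hfix : zi (z x) = x := hfd.localInverse_apply_image
  have hcomp : HasStrictDerivAt (h ∘ zi) (h' * (w x)⁻¹) (z x) := by
    refine HasStrictDerivAt.comp (z x) ?_ hinv
    rw [hfix]; exact hh
  have heq : Φ =ᶠ[𝓝 (z x)] h ∘ zi := by
    have hri : ∀ᶠ y in 𝓝 (z x), z (zi y) = y := hfd.eventually_right_inverse
    filter_upwards [hri] with y hy
    have := hagree (zi y)
    rw [hy] at this
    simpa [Function.comp] using this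
  have hΦ : HasStrictDerivAt Φ (h' * (w x)⁻¹) (z x) := hcomp.congr_of_eventuallyEq heq.symm
  simpa [div_eq_mul_inv] using hΦ.hasDerivAt

/-- Rewrite `r ^ (k/4)` in terms of the fourth root. -/
lemma rpow_nat_div_four {r : ℝ} (hr : 0 < r) (k : ℕ) :
    r ^ (((k : ℝ)) / 4) = (r ^ ((1:ℝ)/4)) ^ k := by
  rw [← Real.rpow_natCast (r ^ ((1:ℝ)/4)) k, ← Real.rpow_mul hr.le]
  congr 1
  ring

/-- `(d/dx) [(c-Q)^{1/4} ψ]`. -/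
def lioDg (c : ℝ) (Q ψ : ℝ → ℝ) (y : ℝ) : ℝ :=
  -deriv Q y * ((1:ℝ)/4) * (c - Q y) ^ ((1:ℝ)/4 - 1) * ψ y
    + (c - Q y) ^ ((1:ℝ)/4) * deriv ψ y

/-- The function `Γ' ∘ z`. -/
def lioH1 (c : ℝ) (Q ψ : ℝ → ℝ) (y : ℝ) : ℝ := lioDg c Q ψ y * (c - Q y) ^ ((1:ℝ)/2)

/-- `(d/dx) lioH1`. -/
def lioDh1 (c : ℝ) (Q ψ : ℝ → ℝ) (y : ℝ) : ℝ :=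
  (-iteratedDeriv 2 Q y * ((1:ℝ)/4) * (c - Q y) ^ ((1:ℝ)/4 - 1) * ψ y
    + -deriv Q y * ((1:ℝ)/4) * (((1:ℝ)/4 - 1) * (c - Q y) ^ ((1:ℝ)/4 - 2) * -deriv Q y) * ψ y
    + -deriv Q y * ((1:ℝ)/4) * (c - Q y) ^ ((1:ℝ)/4 - 1) * deriv ψ y
    + (-deriv Q y * ((1:ℝ)/4) * (c - Q y) ^ ((1:ℝ)/4 - 1) * deriv ψ y
        + (c - Q y) ^ ((1:ℝ)/4) * iteratedDeriv 2 ψ y)) * (c - Q y) ^ ((1:ℝ)/2)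
  + lioDg c Q ψ y * (((1:ℝ)/2) * (c - Q y) ^ ((1:ℝ)/2 - 1) * -deriv Q y)

section LioDeriv

variable {c : ℝ} {Q ψ : ℝ → ℝ}

lemma lioR_strict (hQd1 : ∀ y, HasStrictDerivAt Q (deriv Q y) y) (y : ℝ) :
    HasStrictDerivAt (fun u => c - Q u) (-deriv Q y) y :=
  (hQd1 y).const_sub c

lemma lioRpow_strict (hRpos : ∀ y, 0 < c - Q y)
    (hQd1 : ∀ y, HasStrictDerivAt Q (deriv Q y) y) (p : ℝ) (y : ℝ) :
    HasStrictDerivAt (fun u => (c - Q u) ^ p) (p * (c - Q y) ^ (p - 1) * -deriv Q y) y :=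
  (Real.hasStrictDerivAt_rpow_const_of_ne (hRpos y).ne' p).comp (h₂ := fun x => x ^ p) y
    (lioR_strict hQd1 y)

lemma lioG_strict (hRpos : ∀ y, 0 < c - Q y)
    (hQd1 : ∀ y, HasStrictDerivAt Q (deriv Q y) y)
    (hψd1 : ∀ y, HasStrictDerivAt ψ (deriv ψ y) y) (y : ℝ) :
    HasStrictDerivAt (fun u => (c - Q u) ^ ((1:ℝ)/4) * ψ u) (lioDg c Q ψ y) y := by
  have h := (lioRpow_strict hRpos hQd1 ((1:ℝ)/4) y).fun_mul (hψd1 y)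
  unfold lioDg
  exact h.congr_deriv (by ring)

lemma lioH1_strict (hRpos : ∀ y, 0 < c - Q y)
    (hQd1 : ∀ y, HasStrictDerivAt Q (deriv Q y) y)
    (hQd2 : ∀ y, HasStrictDerivAt (deriv Q) (iteratedDeriv 2 Q y) y)
    (hψd1 : ∀ y, HasStrictDerivAt ψ (deriv ψ y) y)
    (hψd2 : ∀ y, HasStrictDerivAt (deriv ψ) (iteratedDeriv 2 ψ y) y) (y : ℝ) :
    HasStrictDerivAt (lioH1 c Q ψ) (lioDh1 c Q ψ y) y := by
  have hA : HasStrictDerivAt (fun u => -deriv Q u * ((1:ℝ)/4))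
      (-iteratedDeriv 2 Q y * ((1:ℝ)/4)) y := ((hQd2 y).neg).mul_const _
  have hB := lioRpow_strict hRpos hQd1 ((1:ℝ)/4 - 1) y
  rw [show (1:ℝ)/4 - 1 - 1 = (1:ℝ)/4 - 2 by norm_num] at hB
  have hterm1 : HasStrictDerivAt
      (fun u => -deriv Q u * ((1:ℝ)/4) * (c - Q u) ^ ((1:ℝ)/4 - 1) * ψ u)
      (-iteratedDeriv 2 Q y * ((1:ℝ)/4) * (c - Q y) ^ ((1:ℝ)/4 - 1) * ψ y
        + -deriv Q y * ((1:ℝ)/4) * (((1:ℝ)/4 - 1) * (c - Q y) ^ ((1:ℝ)/4 - 2) * -deriv Q y) * ψ y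
        + -deriv Q y * ((1:ℝ)/4) * (c - Q y) ^ ((1:ℝ)/4 - 1) * deriv ψ y) y := by
    have h := ((hA.fun_mul hB).fun_mul (hψd1 y))
    exact h.congr_deriv (by ring)
  have hterm2 : HasStrictDerivAt (fun u => (c - Q u) ^ ((1:ℝ)/4) * deriv ψ u)
      (-deriv Q y * ((1:ℝ)/4) * (c - Q y) ^ ((1:ℝ)/4 - 1) * deriv ψ y
        + (c - Q y) ^ ((1:ℝ)/4) * iteratedDeriv 2 ψ y) y := by
    have h := (lioRpow_strict hRpos hQd1 ((1:ℝ)/4) y).fun_mul (hψd2 y)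
    exact h.congr_deriv (by ring)
  have hDg : HasStrictDerivAt (fun u => lioDg c Q ψ u)
      (-iteratedDeriv 2 Q y * ((1:ℝ)/4) * (c - Q y) ^ ((1:ℝ)/4 - 1) * ψ y
        + -deriv Q y * ((1:ℝ)/4) * (((1:ℝ)/4 - 1) * (c - Q y) ^ ((1:ℝ)/4 - 2) * -deriv Q y) * ψ y
        + -deriv Q y * ((1:ℝ)/4) * (c - Q y) ^ ((1:ℝ)/4 - 1) * deriv ψ y
        + (-deriv Q y * ((1:ℝ)/4) * (c - Q y) ^ ((1:ℝ)/4 - 1) * deriv ψ y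
            + (c - Q y) ^ ((1:ℝ)/4) * iteratedDeriv 2 ψ y)) y := by
    exact hterm1.add hterm2
  have hhalf := lioRpow_strict hRpos hQd1 ((1:ℝ)/2) y
  exact hDg.mul hhalf

end LioDeriv

/-- Under the Liouville change of variables
`z(x) = ∫₀ˣ (c - Q(θ))^{-1/2} dθ`, `Γ(z(x)) = (c - Q(x))^{1/4} ψ(x)`, one has, for
`ψ ∈ H²(ℝ)`, the identity `Mψ = (c-Q)^{-1/4} KΓ` with
`K = -∂_{zz} + q(z) + c - 2κ` and `q = (3/4)Q'' - 3Q - (1/16)(Q')²/(c-Q)`. -/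
theorem Mop_liouville_transform (κ c : ℝ) (hκ : 0 < κ) (hc : 2 * κ < c)
    (Q : ℝ → ℝ) (hQ : CHProfile κ c Q) (ψ Γ q : ℝ → ℝ) (hψ : InHk 2 ψ)
    (hΓ : ∀ x : ℝ, Γ (∫ θ in (0:ℝ)..x, (c - Q θ) ^ (-(1:ℝ)/2))
      = (c - Q x) ^ ((1:ℝ)/4) * ψ x)
    (hq : ∀ x : ℝ, q (∫ θ in (0:ℝ)..x, (c - Q θ) ^ (-(1:ℝ)/2))
      = (3/4) * iteratedDeriv 2 Q x - 3 * Q x - (1/16) * (deriv Q x) ^ 2 / (c - Q x)) :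
    ∀ x : ℝ, Mop κ c Q ψ x = (c - Q x) ^ (-(1:ℝ)/4) *
      (-(iteratedDeriv 2 Γ (∫ θ in (0:ℝ)..x, (c - Q θ) ^ (-(1:ℝ)/2)))
        + (q (∫ θ in (0:ℝ)..x, (c - Q θ) ^ (-(1:ℝ)/2)) + c - 2 * κ)
          * Γ (∫ θ in (0:ℝ)..x, (c - Q θ) ^ (-(1:ℝ)/2))) := by
  intro x
  -- positivity of `c - Q`
  have hRpos : ∀ y, 0 < c - Q y := fun y => lt_trans (by linarith) (hQ.ellip y)
  -- regularity of `Q` and `ψ`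
  have hQ3 : ContDiff ℝ 3 Q := by exact_mod_cast hQ.smooth 3
  have hψ2 : ContDiff ℝ 2 ψ := by exact_mod_cast hψ.1
  have hQd1 : ∀ y, HasStrictDerivAt Q (deriv Q y) y := fun y =>
    hQ3.contDiffAt.hasStrictDerivAt (by norm_num)
  have hdQ2 : ContDiff ℝ 2 (deriv Q) := by
    have h : ContDiff ℝ ((2:ℕ) + 1 : ℕ) Q := hQ3
    rw [show (((2:ℕ) + 1 : ℕ) : WithTop ℕ∞) = (2:ℕ) + 1 by norm_cast] at h
    exact (contDiff_succ_iff_deriv.mp h).2.2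
  have hQd2 : ∀ y, HasStrictDerivAt (deriv Q) (iteratedDeriv 2 Q y) y := fun y => by
    have h : HasStrictDerivAt (deriv Q) (deriv (deriv Q) y) y :=
      hdQ2.contDiffAt.hasStrictDerivAt (by norm_num)
    rwa [iteratedDeriv_two]
  have hψd1 : ∀ y, HasStrictDerivAt ψ (deriv ψ y) y := fun y =>
    hψ2.contDiffAt.hasStrictDerivAt (by norm_num)
  have hdψ1 : ContDiff ℝ 1 (deriv ψ) := by
    have h : ContDiff ℝ ((1:ℕ) + 1 : ℕ) ψ := hψ2
    rw [show (((1:ℕ) + 1 : ℕ) : WithTop ℕ∞) = (1:ℕ) + 1 by norm_cast] at h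
    exact (contDiff_succ_iff_deriv.mp h).2.2
  have hψd2 : ∀ y, HasStrictDerivAt (deriv ψ) (iteratedDeriv 2 ψ y) y := fun y => by
    have h : HasStrictDerivAt (deriv ψ) (deriv (deriv ψ) y) y :=
      hdψ1.contDiffAt.hasStrictDerivAt (by norm_num)
    rwa [iteratedDeriv_two]
  -- the weight and the change of variables
  set w : ℝ → ℝ := fun y => (c - Q y) ^ (-(1:ℝ)/2) with hwdef
  set z : ℝ → ℝ := fun u => ∫ θ in (0:ℝ)..u, (c - Q θ) ^ (-(1:ℝ)/2) with hzdef
  have hwpos : ∀ y, 0 < w y := fun y => Real.rpow_pos_of_pos (hRpos y) _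
  have hwc : Continuous w :=
    (continuous_const.sub hQ3.continuous).rpow_const fun y => Or.inl (hRpos y).ne'
  have hz : ∀ y, HasStrictDerivAt z (w y) y := fun y =>
    intervalIntegral.integral_hasStrictDerivAt_right
      (hwc.intervalIntegrable _ _) (hwc.stronglyMeasurableAtFilter _ _) hwc.continuousAt
  have hdiv : ∀ (a : ℝ) (y : ℝ), a / w y = a * (c - Q y) ^ ((1:ℝ)/2) := by
    intro a y
    rw [hwdef]
    simp only
    rw [show -(1:ℝ)/2 = -((1:ℝ)/2) by norm_num, Real.rpow_neg (hRpos y).le,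
      div_eq_mul_inv, inv_inv]
  -- first derivative of Γ along z
  have hΓz : ∀ y, Γ (z y) = (fun u => (c - Q u) ^ ((1:ℝ)/4) * ψ u) y := fun y => hΓ y
  have hd1 : ∀ y, deriv Γ (z y) = lioH1 c Q ψ y := by
    intro y
    have h := (liouville_chain w z hwpos hz Γ _ hΓz y (lioDg c Q ψ y)
      (lioG_strict hRpos hQd1 hψd1 y)).deriv
    rw [h, hdiv]
    rfl
  -- second derivative of Γ along z
  have hd2 : iteratedDeriv 2 Γ (z x) = lioDh1 c Q ψ x * (c - Q x) ^ ((1:ℝ)/2) := by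
    have h := (liouville_chain w z hwpos hz (deriv Γ) (lioH1 c Q ψ) hd1 x
      (lioDh1 c Q ψ x) (lioH1_strict hRpos hQd1 hQd2 hψd1 hψd2 x)).deriv
    rw [iteratedDeriv_two, h, hdiv]
  -- rewrite the goal
  have hgoal : Mop κ c Q ψ x = (c - Q x) ^ (-(1:ℝ)/4) *
      (-(lioDh1 c Q ψ x * (c - Q x) ^ ((1:ℝ)/2))
        + ((3/4) * iteratedDeriv 2 Q x - 3 * Q x - (1/16) * (deriv Q x) ^ 2 / (c - Q x)
            + c - 2 * κ) * ((c - Q x) ^ ((1:ℝ)/4) * ψ x)) := by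
    -- pure algebra in terms of the fourth root `t`
    set t : ℝ := (c - Q x) ^ ((1:ℝ)/4) with htdef
    have ht : 0 < t := Real.rpow_pos_of_pos (hRpos x) _
    have e5 : c - Q x = t ^ 4 := by
      rw [htdef, ← rpow_nat_div_four (hRpos x) 4]
      norm_num
    have e0 : (c - Q x) ^ (-(1:ℝ)/4) = t⁻¹ := by
      rw [show -(1:ℝ)/4 = -((1:ℝ)/4) by norm_num, Real.rpow_neg (hRpos x).le, htdef]
    have e1 : (c - Q x) ^ ((1:ℝ)/2) = t ^ 2 := by
      rw [show (1:ℝ)/2 = ((2:ℕ):ℝ)/4 by norm_num, rpow_nat_div_four (hRpos x), htdef]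
    have e2 : (c - Q x) ^ ((1:ℝ)/4 - 1) = (t ^ 3)⁻¹ := by
      rw [show (1:ℝ)/4 - 1 = -(((3:ℕ):ℝ)/4) by norm_num, Real.rpow_neg (hRpos x).le,
        rpow_nat_div_four (hRpos x), htdef]
    have e3 : (c - Q x) ^ ((1:ℝ)/4 - 2) = (t ^ 7)⁻¹ := by
      rw [show (1:ℝ)/4 - 2 = -(((7:ℕ):ℝ)/4) by norm_num, Real.rpow_neg (hRpos x).le,
        rpow_nat_div_four (hRpos x), htdef]
    have e4 : (c - Q x) ^ ((1:ℝ)/2 - 1) = (t ^ 2)⁻¹ := by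
      rw [show (1:ℝ)/2 - 1 = -(((2:ℕ):ℝ)/4) by norm_num, Real.rpow_neg (hRpos x).le,
        rpow_nat_div_four (hRpos x), htdef]
    have hQc : Q x - c = -(t ^ 4) := by rw [← e5]; ring
    have e6 : (c - Q x) ^ ((1:ℝ)/4) = t := htdef.symm
    unfold Mop lioDh1 lioDg
    rw [e0, e1, e2, e3, e4, e6, hQc, e5]
    field_simp
    ring
  rw [hgoal, ← hd2, hΓ x, hq x]
end
end

section
/- If ψ ∈ H⁴(ℝ) is odd and Lψ = −∂ₓM∂ₓψ = 0, then ψ = 0; that is, the kernel of L restricted to odd H⁴ functions is trivial. -/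
open MeasureTheory Filter Topology

noncomputable section

/-- If `ψ ∈ H⁴(ℝ)` is odd and `Lψ = -∂ₓM∂ₓψ = 0`, then `ψ = 0`:
the kernel of `L` restricted to odd `H⁴` functions is trivial. -/
theorem Lop_odd_kernel_trivial (κ c : ℝ) (hκ : 0 < κ) (hc : 2 * κ < c)
    (Q : ℝ → ℝ) (hQ : CHProfile κ c Q)
    (hkerM : ∀ φ, InHk 2 φ → (∀ x, Mop κ c Q φ x = 0) →
      ∃ a : ℝ, ∀ x, φ x = a * deriv Q x) :
    ∀ ψ, InHk 4 ψ → OddFun ψ → (∀ x, Lop κ c Q ψ x = 0) → ∀ x, ψ x = 0 := by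
  intro ψ hψ hodd hL
  have hcd : ContDiff ℝ (4:ℕ) ψ := hψ.1
  -- basic differentiability facts
  have hdQ : ∀ n : ℕ, Differentiable ℝ (iteratedDeriv n Q) := fun n =>
    (hQ.smooth (n+1)).differentiable_iteratedDeriv n (by norm_cast; omega)
  have hdψ : ∀ n : ℕ, n < 4 → Differentiable ℝ (iteratedDeriv n ψ) := fun n hn =>
    hcd.differentiable_iteratedDeriv n (by norm_cast)
  -- rewriting Mop κ c Q (deriv ψ)
  have hM : Mop κ c Q (deriv ψ) = fun x =>
      (Q x - c) * iteratedDeriv 3 ψ x + iteratedDeriv 1 Q x * iteratedDeriv 2 ψ x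
        + (iteratedDeriv 2 Q x - 3 * Q x + c - 2 * κ) * iteratedDeriv 1 ψ x := by
    have E3 : iteratedDeriv 2 (deriv ψ) = iteratedDeriv 3 ψ := by
      conv_rhs => rw [iteratedDeriv_succ']
    have E2 : deriv (deriv ψ) = iteratedDeriv 2 ψ := by
      rw [iteratedDeriv_succ', iteratedDeriv_one]
    funext x
    simp only [Mop]
    rw [E3, E2, show deriv Q = iteratedDeriv 1 Q from iteratedDeriv_one.symm,
      show deriv ψ = iteratedDeriv 1 ψ from iteratedDeriv_one.symm]
  -- Mop (deriv ψ) is differentiable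
  have hQd : Differentiable ℝ Q := (hQ.smooth 1).differentiable (by norm_cast)
  have hMdiff : Differentiable ℝ (Mop κ c Q (deriv ψ)) := by
    rw [hM]
    apply Differentiable.add
    apply Differentiable.add
    · exact (hQd.sub_const c).mul (hdψ 3 (by omega))
    · exact (hdQ 1).mul (hdψ 2 (by omega))
    · exact ((((hdQ 2).sub (hQd.const_mul 3)).add_const c).sub_const (2*κ)).mul
        (hdψ 1 (by omega))
  -- Mop (deriv ψ) has zero derivative, hence constant
  have hconst : ∀ x, Mop κ c Q (deriv ψ) x = Mop κ c Q (deriv ψ) 0 := by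
    intro x
    apply is_const_of_deriv_eq_zero hMdiff
    intro y
    have := hL y
    simp only [Lop, neg_eq_zero] at this
    exact this
  -- bounds on coefficients
  obtain ⟨C0, a0, ha0, hC0⟩ := hQ.decay 0
  obtain ⟨C1, a1, ha1, hC1⟩ := hQ.decay 1
  obtain ⟨C2, a2, ha2, hC2⟩ := hQ.decay 2
  have hbd : ∀ (C a : ℝ) (n : ℕ), 0 < a →
      (∀ x : ℝ, |iteratedDeriv n Q x| ≤ C * Real.exp (-a * |x|)) →
      ∀ x, |iteratedDeriv n Q x| ≤ C ∧ 0 ≤ C := by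
    intro C a n ha h x
    have h0 := h x
    have hexp : Real.exp (-a * |x|) ≤ 1 := by
      rw [Real.exp_le_one_iff]
      have : 0 ≤ a * |x| := by positivity
      linarith
    have hCpos : 0 ≤ C := by
      have := h 0
      simp at this
      exact le_trans (abs_nonneg _) this
    exact ⟨le_trans h0 (by nlinarith), hCpos⟩
  have hQ0 : ∀ x, |Q x| ≤ C0 ∧ 0 ≤ C0 := by
    have := hbd C0 a0 0 ha0 hC0
    simpa [iteratedDeriv_zero] using this
  have hQ1 := hbd C1 a1 1 ha1 hC1
  have hQ2 := hbd C2 a2 2 ha2 hC2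
  set K : ℝ := (C0 + |c|) + C1 + (C2 + 3*C0 + |c| + 2*κ) with hK
  -- L² bound for Mop (deriv ψ)
  have hmem : ∀ j, j ≤ 4 → MemLp (iteratedDeriv j ψ) 2 (volume : Measure ℝ) := hψ.2
  have hg : MemLp (fun x => K * (‖iteratedDeriv 1 ψ x‖ + ‖iteratedDeriv 2 ψ x‖
      + ‖iteratedDeriv 3 ψ x‖)) 2 (volume : Measure ℝ) := by
    have h1 := (hmem 1 (by omega)).norm
    have h2 := (hmem 2 (by omega)).norm
    have h3 := (hmem 3 (by omega)).norm
    exact (((h1.add h2).add h3).const_mul K)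
  have hMcont : Continuous (Mop κ c Q (deriv ψ)) := hMdiff.continuous
  have hMmem : MemLp (Mop κ c Q (deriv ψ)) 2 (volume : Measure ℝ) := by
    apply hg.of_le hMcont.aestronglyMeasurable
    filter_upwards with x
    rw [hM]
    have e1 := (hQ1 x).1
    have e2 := (hQ2 x).1
    have e0 := (hQ0 x).1
    have n0 := (hQ0 x).2
    have n1 := (hQ1 x).2
    have n2 := (hQ2 x).2
    have b1 : |Q x - c| ≤ C0 + |c| := by
      rw [abs_le]
      constructor <;>
        nlinarith [le_abs_self (Q x), neg_abs_le (Q x), le_abs_self c, neg_abs_le c, e0]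
    have b3 : |iteratedDeriv 2 Q x - 3 * Q x + c - 2 * κ| ≤ C2 + 3*C0 + |c| + 2*κ := by
      rw [abs_le]
      constructor <;>
        nlinarith [le_abs_self (iteratedDeriv 2 Q x), neg_abs_le (iteratedDeriv 2 Q x),
          le_abs_self (Q x), neg_abs_le (Q x), le_abs_self c, neg_abs_le c, e2, e0,
          abs_nonneg c, hκ]
    have hKb1 : C0 + |c| ≤ K := by
      have : 0 ≤ |c| := abs_nonneg c
      simp only [hK]; nlinarith
    have hKb2 : C1 ≤ K := by
      have : 0 ≤ |c| := abs_nonneg c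
      simp only [hK]; nlinarith
    have hKb3 : C2 + 3*C0 + |c| + 2*κ ≤ K := by
      have : 0 ≤ |c| := abs_nonneg c
      simp only [hK]; nlinarith
    have hbigK : 0 ≤ K := le_trans (by linarith [abs_nonneg c]) hKb1
    simp only [Real.norm_eq_abs]
    have habs : |K * (|iteratedDeriv 1 ψ x| + |iteratedDeriv 2 ψ x| + |iteratedDeriv 3 ψ x|)|
        = K * (|iteratedDeriv 1 ψ x| + |iteratedDeriv 2 ψ x| + |iteratedDeriv 3 ψ x|) := by
      apply abs_of_nonneg; positivity
    rw [habs]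
    calc |(Q x - c) * iteratedDeriv 3 ψ x + iteratedDeriv 1 Q x * iteratedDeriv 2 ψ x
        + (iteratedDeriv 2 Q x - 3 * Q x + c - 2 * κ) * iteratedDeriv 1 ψ x|
        ≤ |(Q x - c) * iteratedDeriv 3 ψ x| + |iteratedDeriv 1 Q x * iteratedDeriv 2 ψ x|
          + |(iteratedDeriv 2 Q x - 3 * Q x + c - 2 * κ) * iteratedDeriv 1 ψ x| :=
          (abs_add_le _ _).trans (by gcongr; exact abs_add_le _ _)
      _ ≤ K * |iteratedDeriv 3 ψ x| + K * |iteratedDeriv 2 ψ x| + K * |iteratedDeriv 1 ψ x| := by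
          rw [abs_mul, abs_mul, abs_mul]
          gcongr <;> [exact le_trans b1 hKb1; exact le_trans e1 hKb2; exact le_trans b3 hKb3]
      _ = K * (|iteratedDeriv 1 ψ x| + |iteratedDeriv 2 ψ x| + |iteratedDeriv 3 ψ x|) := by ring
  -- the constant value is 0
  have hzero : ∀ x, Mop κ c Q (deriv ψ) x = 0 := by
    have hk : Mop κ c Q (deriv ψ) 0 = 0 := by
      by_contra hk
      have hmc : MemLp (fun _ : ℝ => Mop κ c Q (deriv ψ) 0) 2 (volume : Measure ℝ) := by
        have : (fun _ : ℝ => Mop κ c Q (deriv ψ) 0) = Mop κ c Q (deriv ψ) := by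
          funext x; exact (hconst x).symm
        rwa [this]
      have := hmc.2
      rw [eLpNorm_const _ (by norm_num) (by simp [NeZero.ne])] at this
      simp [ENNReal.rpow_eq_top_iff, hk] at this
    intro x; rw [hconst x, hk]
  -- deriv ψ ∈ H²
  have hφH2 : InHk 2 (deriv ψ) := by
    constructor
    · apply contDiff_of_differentiable_iteratedDeriv
      intro m hm
      rw [← iteratedDeriv_succ']
      have hm2 : m ≤ 2 := by exact_mod_cast hm
      exact hdψ (m+1) (by omega)
    · intro j hj
      rw [← iteratedDeriv_succ']
      exact hmem (j+1) (by omega)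
  obtain ⟨a, ha⟩ := hkerM (deriv ψ) hφH2 hzero
  -- ψ - a Q is constant
  have hdiff2 : Differentiable ℝ (fun x => ψ x - a * Q x) :=
    (hcd.differentiable (by norm_cast)).sub (hQd.const_mul a)
  have hconst2 : ∀ x, ψ x - a * Q x = ψ 0 - a * Q 0 := by
    intro x
    apply is_const_of_deriv_eq_zero hdiff2
    intro y
    rw [deriv_fun_sub ((hcd.differentiable (by norm_cast)) y)
        ((hQd.const_mul a) y), deriv_const_mul a (hQd y)]
    rw [ha y]; ring
  have hψ0 : ψ 0 = 0 := by
    have := hodd 0; simp at this; linarith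
  have hψeq : ∀ x, ψ x = a * (Q x - Q 0) := by
    intro x
    have := hconst2 x
    rw [hψ0] at this
    linarith [this]
  intro x
  have heven : ψ (-x) = ψ x := by rw [hψeq, hψeq, hQ.even]
  have := hodd x
  linarith [heven, this]
end
end

section
/- For the block operator 𝓛 = [[0, L],[1, 0]] on X = L²_odd(ℝ) × H²_odd(ℝ) with domain Y = H²_odd(ℝ) × H⁴_odd(ℝ), a complex number μ belongs to the resolvent set ρ(𝓛) if and only if μ² belongs to the resolvent set ρ(L) of L : H⁴_odd(ℝ) ⊂ L²_odd(ℝ) → L²_odd(ℝ); moreover μ is an eigenvalue of 𝓛 if and only if μ² is an eigenvalue of L. -/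
open MeasureTheory Filter Topology

noncomputable section

/-! ### Auxiliary lemmas -/

section Aux

open Complex MeasureTheory

local notation "conj'" => starRingEnd ℂ

/-- Iterated derivatives lose regularity one at a time. -/
lemma contDiff_iteratedDeriv_aux {F : Type*} [NormedAddCommGroup F] [NormedSpace ℝ F]
    [CompleteSpace F] {f : ℝ → F} {n k : ℕ} (h : ContDiff ℝ (n + k) f) :
    ContDiff ℝ n (iteratedDeriv k f) := by
  induction k generalizing f with
  | zero => simpa using h
  | succ k ih =>
    rw [iteratedDeriv_succ']
    refine ih ?_
    have h' : ContDiff ℝ (((n + k : ℕ) : WithTop ℕ∞) + 1) f := by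
      exact_mod_cast h
    exact (contDiff_succ_iff_deriv.mp h').2.2

lemma differentiable_iteratedDeriv_aux {F : Type*} [NormedAddCommGroup F] [NormedSpace ℝ F]
    {f : ℝ → F} {n k : ℕ} (h : ContDiff ℝ n f)
    (hk : k < n) : Differentiable ℝ (iteratedDeriv k f) :=
  h.differentiable_iteratedDeriv k (by exact_mod_cast hk)

lemma deriv_iteratedDeriv_aux {f : ℝ → ℂ} (k : ℕ) :
    deriv (iteratedDeriv k f) = iteratedDeriv (k + 1) f := (iteratedDeriv_succ).symm

lemma iteratedDeriv_zero_fun {k : ℕ} : iteratedDeriv k (0 : ℝ → ℂ) = 0 := by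
  induction k with
  | zero => simp [iteratedDeriv_zero]
  | succ k ih =>
    rw [iteratedDeriv_succ, ih]
    funext x
    exact deriv_const x 0

lemma iteratedDeriv_smul_aux {k : ℕ} {f : ℝ → ℂ} (h : ContDiff ℝ k f) (a : ℂ) :
    iteratedDeriv k (fun x => a * f x) = fun x => a * iteratedDeriv k f x := by
  funext x
  have : (fun x => a * f x) = a • f := by funext y; simp [smul_eq_mul]
  rw [this, ← iteratedDerivWithin_univ, ← iteratedDerivWithin_univ,
    iteratedDerivWithin_const_smul (Set.mem_univ x) uniqueDiffOn_univ a h.contDiffWithinAt]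
  simp [smul_eq_mul]

lemma iteratedDeriv_add_aux {k : ℕ} {f g : ℝ → ℂ} (hf : ContDiff ℝ k f)
    (hg : ContDiff ℝ k g) :
    iteratedDeriv k (fun x => f x + g x) = fun x => iteratedDeriv k f x + iteratedDeriv k g x := by
  funext x
  have : (fun x => f x + g x) = f + g := rfl
  rw [this, ← iteratedDerivWithin_univ, ← iteratedDerivWithin_univ, ← iteratedDerivWithin_univ,
    iteratedDerivWithin_add (Set.mem_univ x) uniqueDiffOn_univ hf.contDiffWithinAt hg.contDiffWithinAt]

/-- `InHkC` is antitone in `k`. -/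
lemma InHkC.of_le {k m : ℕ} {ψ : ℝ → ℂ} (h : InHkC m ψ) (hk : k ≤ m) : InHkC k ψ :=
  ⟨h.1.of_le (by exact_mod_cast hk), fun j hj => h.2 j (hj.trans hk)⟩

lemma InHkC.add {k : ℕ} {f g : ℝ → ℂ} (hf : InHkC k f) (hg : InHkC k g) :
    InHkC k (fun x => f x + g x) := by
  refine ⟨hf.1.add hg.1, fun j hj => ?_⟩
  rw [iteratedDeriv_add_aux (hf.1.of_le (by exact_mod_cast hj)) (hg.1.of_le (by exact_mod_cast hj))]
  exact (hf.2 j hj).add (hg.2 j hj)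

lemma InHkC.const_mul {k : ℕ} {f : ℝ → ℂ} (hf : InHkC k f) (a : ℂ) :
    InHkC k (fun x => a * f x) := by
  refine ⟨ContDiff.mul contDiff_const hf.1, fun j hj => ?_⟩
  rw [iteratedDeriv_smul_aux (hf.1.of_le (by exact_mod_cast hj)) a]
  exact (hf.2 j hj).const_mul a

lemma InHkC_zero {k : ℕ} : InHkC k (0 : ℝ → ℂ) := by
  refine ⟨(contDiff_const : ContDiff ℝ k (fun _ => (0 : ℂ))), fun j hj => ?_⟩
  rw [iteratedDeriv_zero_fun]
  exact MemLp.zero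

end Aux

section Aux2

open Complex MeasureTheory

lemma memL2_mul_bounded {g : ℝ → ℝ} {f : ℝ → ℂ} (hg : Continuous g) {K : ℝ}
    (hK : ∀ x, |g x| ≤ K) (hf : MemLp f 2 (volume : Measure ℝ)) :
    MemLp (fun x => (g x : ℂ) * f x) 2 (volume : Measure ℝ) := by
  refine MemLp.of_le_mul (c := K) hf
    (((Complex.continuous_ofReal.comp hg).aestronglyMeasurable).mul hf.1) ?_
  filter_upwards with x
  rw [norm_mul]
  have h1 : ‖(g x : ℂ)‖ ≤ K := by simpa [Complex.norm_real] using hK x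
  exact mul_le_mul_of_nonneg_right h1 (norm_nonneg _)

lemma memL2_conj {f : ℝ → ℂ} (hf : MemLp f 2 (volume : Measure ℝ)) :
    MemLp (fun x => (starRingEnd ℂ) (f x)) 2 (volume : Measure ℝ) := by
  have hm : AEStronglyMeasurable (fun x => (starRingEnd ℂ) (f x)) (volume : Measure ℝ) := by
    exact continuous_star.comp_aestronglyMeasurable hf.1
  refine MemLp.of_le_mul (c := 1) hf hm ?_
  filter_upwards with x
  simp

lemma integrable_conj_mul {f g : ℝ → ℂ} (hf : MemLp f 2 (volume : Measure ℝ))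
    (hg : MemLp g 2 (volume : Measure ℝ)) :
    Integrable (fun x => (starRingEnd ℂ) (f x) * g x) (volume : Measure ℝ) := by
  have h := L2.integrable_inner (𝕜 := ℂ) (hf.toLp f) (hg.toLp g)
  refine h.congr ?_
  filter_upwards [hf.coeFn_toLp, hg.coeFn_toLp] with x h1 h2
  rw [RCLike.inner_apply, h1, h2, mul_comm]

lemma integrable_mul2 {f g : ℝ → ℂ} (hf : MemLp f 2 (volume : Measure ℝ))
    (hg : MemLp g 2 (volume : Measure ℝ)) :
    Integrable (fun x => f x * g x) (volume : Measure ℝ) := by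
  have h := integrable_conj_mul (memL2_conj hf) hg
  refine h.congr ?_
  filter_upwards with x
  simp

lemma norm_integral_conj_mul_le {f g : ℝ → ℂ} (hf : MemLp f 2 (volume : Measure ℝ))
    (hg : MemLp g 2 (volume : Measure ℝ)) :
    ‖∫ x : ℝ, (starRingEnd ℂ) (f x) * g x‖ ≤ L2normC f * L2normC g := by
  have h1 : ∫ x : ℝ, (starRingEnd ℂ) (f x) * g x = @inner ℂ _ _ (hf.toLp f) (hg.toLp g) := by
    rw [L2.inner_def]
    refine integral_congr_ae ?_
    filter_upwards [hf.coeFn_toLp, hg.coeFn_toLp] with x h1 h2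
    rw [RCLike.inner_apply, h1, h2, mul_comm]
  rw [h1]
  refine (norm_inner_le_norm _ _).trans ?_
  rw [Lp.norm_toLp, Lp.norm_toLp]
  exact le_refl _

lemma integrable_normSq {f : ℝ → ℂ} (hf : MemLp f 2 (volume : Measure ℝ)) :
    Integrable (fun x => Complex.normSq (f x)) (volume : Measure ℝ) := by
  have h := (memLp_two_iff_integrable_sq_norm hf.1).mp hf
  refine h.congr ?_
  filter_upwards with x
  rw [← Complex.sq_norm]

lemma sq_L2normC {f : ℝ → ℂ} (hf : MemLp f 2 (volume : Measure ℝ)) :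
    (L2normC f) ^ 2 = ∫ x : ℝ, Complex.normSq (f x) := by
  have h1 : (L2normC f) ^ 2 = ‖hf.toLp f‖ ^ 2 := by rw [Lp.norm_toLp]; rfl
  rw [h1, InnerProductSpace.norm_sq_eq_re_inner (𝕜 := ℂ), L2.inner_def, ← integral_re (L2.integrable_inner _ _)]
  refine integral_congr_ae ?_
  filter_upwards [hf.coeFn_toLp] with x hx
  rw [RCLike.inner_apply, hx, mul_comm]
  have : (starRingEnd ℂ) (f x) * f x = (Complex.normSq (f x) : ℂ) := by
    rw [mul_comm, Complex.mul_conj]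
  rw [this]
  simp

lemma L2normC_nonneg (f : ℝ → ℂ) : 0 ≤ L2normC f := ENNReal.toReal_nonneg

lemma L2normC_add_le {f g : ℝ → ℂ} (hf : MemLp f 2 (volume : Measure ℝ))
    (hg : MemLp g 2 (volume : Measure ℝ)) :
    L2normC (fun x => f x + g x) ≤ L2normC f + L2normC g := by
  have h := eLpNorm_add_le hf.1 hg.1 (by norm_num : (1:ENNReal) ≤ 2)
  unfold L2normC
  calc (eLpNorm (fun x => f x + g x) 2 volume).toReal
      ≤ (eLpNorm f 2 volume + eLpNorm g 2 volume).toReal := by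
        refine ENNReal.toReal_mono ?_ h
        exact ENNReal.add_ne_top.mpr ⟨hf.2.ne, hg.2.ne⟩
    _ = _ := ENNReal.toReal_add hf.2.ne hg.2.ne

lemma L2normC_const_mul (a : ℂ) (f : ℝ → ℂ) :
    L2normC (fun x => a * f x) = ‖a‖ * L2normC f := by
  unfold L2normC
  have : (fun x => a * f x) = a • f := by funext x; simp [smul_eq_mul]
  rw [this, eLpNorm_const_smul, ENNReal.toReal_mul]
  simp

lemma L2normC_congr_ae {f g : ℝ → ℂ} (h : f =ᵐ[(volume : Measure ℝ)] g) :
    L2normC f = L2normC g := by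
  unfold L2normC
  rw [eLpNorm_congr_ae h]

/-- Uniform bound on the derivatives of `Q`. -/
lemma CHProfile.iteratedDeriv_bound {κ c : ℝ} {Q : ℝ → ℝ} (hQ : CHProfile κ c Q) (n : ℕ) :
    ∃ K : ℝ, 0 ≤ K ∧ ∀ x, |iteratedDeriv n Q x| ≤ K := by
  obtain ⟨C, a, ha, hC⟩ := hQ.decay n
  refine ⟨|C|, abs_nonneg _, fun x => ?_⟩
  refine (hC x).trans ?_
  have h1 : Real.exp (-a * |x|) ≤ 1 := by
    rw [Real.exp_le_one_iff]
    have : 0 ≤ a * |x| := mul_nonneg ha.le (abs_nonneg _)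
    linarith
  calc C * Real.exp (-a * |x|) ≤ |C| * Real.exp (-a * |x|) := by
        have := Real.exp_pos (-a * |x|)
        nlinarith [le_abs_self C]
    _ ≤ |C| * 1 := by nlinarith [abs_nonneg C]
    _ = |C| := mul_one _

lemma norm_integral_mul_conj_le {f g : ℝ → ℂ} (hf : MemLp f 2 (volume : Measure ℝ))
    (hg : MemLp g 2 (volume : Measure ℝ)) :
    ‖∫ x : ℝ, f x * (starRingEnd ℂ) (g x)‖ ≤ L2normC g * L2normC f := by
  have h : (∫ x : ℝ, f x * (starRingEnd ℂ) (g x))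
      = ∫ x : ℝ, (starRingEnd ℂ) (g x) * f x := by
    refine integral_congr_ae ?_
    filter_upwards with x
    ring
  rw [h]
  exact norm_integral_conj_mul_le hg hf

lemma integral_ofReal_c {f : ℝ → ℝ} :
    (∫ x : ℝ, ((f x : ℝ) : ℂ)) = ((∫ x : ℝ, f x : ℝ) : ℂ) := integral_ofReal

end Aux2

section Parts

open Complex MeasureTheory Filter Topology Set

lemma tendsto_atTop_of_hasDerivAt_integrable {w g : ℝ → ℂ}
    (hw : ∀ x, HasDerivAt w (g x) x) (hg : Integrable g (volume : Measure ℝ)) :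
    ∃ l : ℂ, Tendsto w atTop (𝓝 l) := by
  have hval : ∀ x : ℝ, w x = w 0 + ∫ t in (0:ℝ)..x, g t := by
    intro x
    rw [intervalIntegral.integral_eq_sub_of_hasDerivAt (fun t _ => hw t)
      hg.intervalIntegrable]
    ring
  have h1 : Tendsto (fun x : ℝ => ∫ t in (0:ℝ)..x, g t) atTop
      (𝓝 (∫ t in Ioi (0:ℝ), g t)) :=
    intervalIntegral_tendsto_integral_Ioi 0 hg.integrableOn tendsto_id
  refine ⟨w 0 + ∫ t in Ioi (0:ℝ), g t, ?_⟩
  have h2 := (tendsto_const_nhds (x := w 0) (f := atTop)).add h1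
  refine h2.congr ?_
  intro x; exact (hval x).symm

lemma tendsto_atBot_of_hasDerivAt_integrable {w g : ℝ → ℂ}
    (hw : ∀ x, HasDerivAt w (g x) x) (hg : Integrable g (volume : Measure ℝ)) :
    ∃ l : ℂ, Tendsto w atBot (𝓝 l) := by
  have hval : ∀ x : ℝ, w x = w 0 - ∫ t in x..(0:ℝ), g t := by
    intro x
    rw [intervalIntegral.integral_eq_sub_of_hasDerivAt (fun t _ => hw t)
      hg.intervalIntegrable]
    ring
  have h1 : Tendsto (fun x : ℝ => ∫ t in x..(0:ℝ), g t) atBot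
      (𝓝 (∫ t in Iic (0:ℝ), g t)) :=
    intervalIntegral_tendsto_integral_Iic 0 hg.integrableOn tendsto_id
  refine ⟨w 0 - ∫ t in Iic (0:ℝ), g t, ?_⟩
  have h2 := (tendsto_const_nhds (x := w 0) (f := atBot)).sub h1
  refine h2.congr ?_
  intro x; exact (hval x).symm

lemma limit_eq_zero_atTop_of_integrable {w : ℝ → ℂ} (hw : Integrable w (volume : Measure ℝ))
    {l : ℂ} (h : Tendsto w atTop (𝓝 l)) : l = 0 := by
  by_contra hl
  have hl' : 0 < ‖l‖ := norm_pos_iff.mpr hl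
  have hpos : 0 < ‖l‖ / 2 := by linarith
  have hev : ∀ᶠ x in atTop, ‖l‖ / 2 ≤ ‖w x‖ :=
    (h.norm).eventually_const_le (by linarith)
  obtain ⟨A, hA⟩ := eventually_atTop.mp hev
  have hconst : IntegrableOn (fun _ : ℝ => ‖l‖ / 2) (Ioi A) (volume : Measure ℝ) := by
    refine Integrable.mono' (hw.norm.integrableOn) aestronglyMeasurable_const ?_
    filter_upwards [ae_restrict_mem measurableSet_Ioi] with x hx
    rw [Real.norm_eq_abs, _root_.abs_of_nonneg hpos.le]
    exact hA x (le_of_lt hx)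
  rw [integrableOn_const_iff] at hconst
  rcases hconst with h1 | h2
  · have := enorm_eq_zero.mp h1; linarith
  · rw [Real.volume_Ioi] at h2
    exact absurd h2 (lt_irrefl _)

lemma limit_eq_zero_atBot_of_integrable {w : ℝ → ℂ} (hw : Integrable w (volume : Measure ℝ))
    {l : ℂ} (h : Tendsto w atBot (𝓝 l)) : l = 0 := by
  by_contra hl
  have hl' : 0 < ‖l‖ := norm_pos_iff.mpr hl
  have hpos : 0 < ‖l‖ / 2 := by linarith
  have hev : ∀ᶠ x in atBot, ‖l‖ / 2 ≤ ‖w x‖ :=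
    (h.norm).eventually_const_le (by linarith)
  obtain ⟨A, hA⟩ := eventually_atBot.mp hev
  have hconst : IntegrableOn (fun _ : ℝ => ‖l‖ / 2) (Iio A) (volume : Measure ℝ) := by
    refine Integrable.mono' (hw.norm.integrableOn) aestronglyMeasurable_const ?_
    filter_upwards [ae_restrict_mem measurableSet_Iio] with x hx
    rw [Real.norm_eq_abs, _root_.abs_of_nonneg hpos.le]
    exact hA x (le_of_lt hx)
  rw [integrableOn_const_iff] at hconst
  rcases hconst with h1 | h2
  · have := enorm_eq_zero.mp h1; linarith
  · rw [Real.volume_Iio] at h2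
    exact absurd h2 (lt_irrefl _)

/-- If `w` is integrable with integrable derivative `g`, then `∫ g = 0`. -/
lemma integral_deriv_eq_zero_of_integrable {w g : ℝ → ℂ}
    (hw : ∀ x, HasDerivAt w (g x) x) (hg : Integrable g (volume : Measure ℝ))
    (hwi : Integrable w (volume : Measure ℝ)) : ∫ x : ℝ, g x = 0 := by
  obtain ⟨lt, hlt⟩ := tendsto_atTop_of_hasDerivAt_integrable hw hg
  obtain ⟨lb, hlb⟩ := tendsto_atBot_of_hasDerivAt_integrable hw hg
  have ht0 : lt = 0 := limit_eq_zero_atTop_of_integrable hwi hlt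
  have hb0 : lb = 0 := limit_eq_zero_atBot_of_integrable hwi hlb
  subst ht0; subst hb0
  have key : Tendsto (fun n : ℝ => ∫ x in (-n)..n, g x) atTop (𝓝 (∫ x : ℝ, g x)) :=
    intervalIntegral_tendsto_integral hg tendsto_neg_atTop_atBot tendsto_id
  have key2 : Tendsto (fun n : ℝ => ∫ x in (-n)..n, g x) atTop (𝓝 0) := by
    have heq : ∀ n : ℝ, (∫ x in (-n)..n, g x) = w n - w (-n) := fun n =>
      intervalIntegral.integral_eq_sub_of_hasDerivAt (fun t _ => hw t) hg.intervalIntegrable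
    have h3 : Tendsto (fun n : ℝ => w n - w (-n)) atTop (𝓝 (0 - 0)) :=
      (hlt.comp tendsto_id).sub (hlb.comp tendsto_neg_atTop_atBot)
    simp only [sub_zero] at h3
    exact h3.congr (fun n => (heq n).symm)
  exact tendsto_nhds_unique key key2

/-- Integration by parts on the line for `L²` functions with `L²` derivatives. -/
lemma integral_by_parts {u v u' v' : ℝ → ℂ}
    (hu : ∀ x, HasDerivAt u (u' x) x) (hv : ∀ x, HasDerivAt v (v' x) x)
    (hu2 : MemLp u 2 (volume : Measure ℝ)) (hu'2 : MemLp u' 2 (volume : Measure ℝ))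
    (hv2 : MemLp v 2 (volume : Measure ℝ)) (hv'2 : MemLp v' 2 (volume : Measure ℝ)) :
    ∫ x : ℝ, u' x * (starRingEnd ℂ) (v x) = -∫ x : ℝ, u x * (starRingEnd ℂ) (v' x) := by
  have hw : ∀ x, HasDerivAt (fun y => u y * (starRingEnd ℂ) (v y))
      (u' x * (starRingEnd ℂ) (v x) + u x * (starRingEnd ℂ) (v' x)) x := by
    intro x
    have h1 : HasDerivAt (fun y => (starRingEnd ℂ) (v y)) ((starRingEnd ℂ) (v' x)) x := by
      have := (hv x).star
      simpa only [← starRingEnd_apply] using this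
    exact (hu x).mul h1
  have hi1 : Integrable (fun x => u' x * (starRingEnd ℂ) (v x)) (volume : Measure ℝ) :=
    integrable_mul2 hu'2 (memL2_conj hv2)
  have hi2 : Integrable (fun x => u x * (starRingEnd ℂ) (v' x)) (volume : Measure ℝ) :=
    integrable_mul2 hu2 (memL2_conj hv'2)
  have hwi : Integrable (fun x => u x * (starRingEnd ℂ) (v x)) (volume : Measure ℝ) :=
    integrable_mul2 hu2 (memL2_conj hv2)
  have h0 : ∫ x : ℝ, (u' x * (starRingEnd ℂ) (v x) + u x * (starRingEnd ℂ) (v' x)) = 0 :=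
    integral_deriv_eq_zero_of_integrable hw (hi1.add hi2) hwi
  rw [integral_add hi1 hi2] at h0
  linear_combination h0

section QFacts

open Complex MeasureTheory Filter Topology Set

variable {κ c : ℝ} {Q : ℝ → ℝ}

lemma CHProfile.continuous_iter (hQ : CHProfile κ c Q) (k : ℕ) :
    Continuous (iteratedDeriv k Q) := by
  have h : ContDiff ℝ ((0 : ℕ) + k) Q := by simpa using hQ.smooth k
  have := contDiff_iteratedDeriv_aux h
  exact this.continuous

lemma CHProfile.hasDerivAt_iter (hQ : CHProfile κ c Q) (k : ℕ) (x : ℝ) :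
    HasDerivAt (iteratedDeriv k Q) (iteratedDeriv (k + 1) Q x) x := by
  have hd : Differentiable ℝ (iteratedDeriv k Q) :=
    (hQ.smooth (k + 1)).differentiable_iteratedDeriv k (by exact_mod_cast Nat.lt_succ_self k)
  have h1 := (hd x).hasDerivAt
  rwa [← iteratedDeriv_succ] at h1

lemma CHProfile.hasDerivAt_ofReal_iter (hQ : CHProfile κ c Q) (k : ℕ) (x : ℝ) :
    HasDerivAt (fun y => ((iteratedDeriv k Q y : ℝ) : ℂ)) (((iteratedDeriv (k + 1) Q x : ℝ) : ℂ)) x :=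
  (hQ.hasDerivAt_iter k x).ofReal_comp

end QFacts

section KeyEstimate

open Complex MeasureTheory Filter Topology Set

variable {κ c : ℝ} {Q : ℝ → ℝ}

/-- The potential term in `M`. -/
private def Vfun (κ c : ℝ) (Q : ℝ → ℝ) : ℝ → ℝ := fun x =>
  iteratedDeriv 2 Q x - 3 * Q x + c - 2 * κ

set_option maxHeartbeats 1000000 in
/-- The key elliptic-type estimate: `‖ψ‖_{H²} ≤ K (‖Lψ‖_{L²} + ‖ψ‖_{L²})` for `ψ ∈ H⁴`,
together with `Lψ ∈ L²`. -/
private lemma key_estimate (hκ : 0 < κ) (hQ : CHProfile κ c Q) :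
    ∃ K : ℝ, 0 < K ∧ ∀ ψ : ℝ → ℂ, InHkC 4 ψ →
      MemLp (LopC κ c Q ψ) 2 (volume : Measure ℝ) ∧
      HkNormC 2 ψ ≤ K * (L2normC (LopC κ c Q ψ) + L2normC ψ) := by
  classical
  -- bounds for the derivatives of Q
  obtain ⟨K0, hK0n, hK0⟩ := hQ.iteratedDeriv_bound 0
  obtain ⟨K1, hK1n, hK1⟩ := hQ.iteratedDeriv_bound 1
  obtain ⟨K2, hK2n, hK2⟩ := hQ.iteratedDeriv_bound 2
  obtain ⟨K3, hK3n, hK3⟩ := hQ.iteratedDeriv_bound 3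
  have hQ0 : ∀ x, |Q x| ≤ K0 := by intro x; simpa [iteratedDeriv_zero] using hK0 x
  have hQ1 : ∀ x, |deriv Q x| ≤ K1 := by
    intro x; simpa [iteratedDeriv_one] using hK1 x
  -- bound for V and its derivative
  set Bv : ℝ := K2 + 3 * K0 + |c| + 2 * |κ| with hBv_def
  have hBvn : 0 ≤ Bv := by positivity
  have hVb : ∀ x, |Vfun κ c Q x| ≤ Bv := by
    intro x
    have h1 := hK2 x
    have h2 := hQ0 x
    unfold Vfun
    rw [hBv_def]
    have := abs_nonneg c
    have := abs_nonneg κ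
    have h3 : |iteratedDeriv 2 Q x - 3 * Q x + c - 2 * κ|
        ≤ |iteratedDeriv 2 Q x| + 3 * |Q x| + |c| + 2 * |κ| := by
      calc |iteratedDeriv 2 Q x - 3 * Q x + c - 2 * κ|
          ≤ |iteratedDeriv 2 Q x - 3 * Q x + c| + |2 * κ| := abs_sub _ _
        _ ≤ |iteratedDeriv 2 Q x - 3 * Q x| + |c| + |2 * κ| := by
            have := abs_add_le (iteratedDeriv 2 Q x - 3 * Q x) c; linarith
        _ ≤ |iteratedDeriv 2 Q x| + |3 * Q x| + |c| + |2 * κ| := by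
            have := abs_sub (iteratedDeriv 2 Q x) (3 * Q x); linarith
        _ = |iteratedDeriv 2 Q x| + 3 * |Q x| + |c| + 2 * |κ| := by
            rw [abs_mul, abs_mul]; norm_num
    linarith
  set Bv' : ℝ := K3 + 3 * K1 with hBv'_def
  have hVb' : ∀ x, |iteratedDeriv 3 Q x - 3 * deriv Q x| ≤ Bv' := by
    intro x
    have h1 := hK3 x
    have h2 := hQ1 x
    have h3 := abs_sub (iteratedDeriv 3 Q x) (3 * deriv Q x)
    rw [abs_mul] at h3
    rw [hBv'_def]
    norm_num at h3 ⊢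
    linarith
  have hQc : ∀ x, |Q x - c| ≤ K0 + |c| := by
    intro x
    have := abs_sub (Q x) c
    have := hQ0 x
    linarith
  -- continuity of coefficients
  have hcQ : Continuous Q := by simpa [iteratedDeriv_zero] using hQ.continuous_iter 0
  have hcQ1 : Continuous (deriv Q) := by
    have := hQ.continuous_iter 1; rwa [iteratedDeriv_one] at this
  have hcQ2 : Continuous (iteratedDeriv 2 Q) := hQ.continuous_iter 2
  have hcQ3 : Continuous (iteratedDeriv 3 Q) := hQ.continuous_iter 3
  have hcV : Continuous (Vfun κ c Q) := by
    unfold Vfun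
    exact ((hcQ2.sub ((continuous_const.mul hcQ))).add continuous_const).sub continuous_const
  have hcQc : Continuous (fun x => Q x - c) := hcQ.sub continuous_const
  -- the constant
  set c₄ : ℝ := (2 * κ + Bv ^ 2) / (4 * κ ^ 2) with hc₄_def
  have hc₄n : 0 ≤ c₄ := by positivity
  set K : ℝ := 1 + Real.sqrt c₄ + Real.sqrt (Real.sqrt c₄) with hK_def
  have hKpos : 0 < K := by positivity
  refine ⟨K, hKpos, fun ψ hψ => ?_⟩
  -- notation for derivatives of ψ
  have hψc : ContDiff ℝ 4 ψ := hψ.1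
  have hmem : ∀ j ≤ 4, MemLp (iteratedDeriv j ψ) 2 (volume : Measure ℝ) := hψ.2
  have hψd : ∀ j, j < 4 → ∀ x : ℝ,
      HasDerivAt (iteratedDeriv j ψ) (iteratedDeriv (j + 1) ψ x) x := by
    intro j hj x
    have hd : Differentiable ℝ (iteratedDeriv j ψ) :=
      hψc.differentiable_iteratedDeriv j (by exact_mod_cast hj)
    have h1 := (hd x).hasDerivAt
    rwa [← iteratedDeriv_succ] at h1
  -- the function m = M (deriv ψ) rewritten in terms of iterated derivatives of ψ
  have hm_eq : MopC κ c Q (deriv ψ) = fun x =>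
      ((Q x - c : ℝ) : ℂ) * iteratedDeriv 3 ψ x + ((deriv Q x : ℝ) : ℂ) * iteratedDeriv 2 ψ x
        + ((Vfun κ c Q x : ℝ) : ℂ) * iteratedDeriv 1 ψ x := by
    funext x
    unfold MopC Vfun
    have e3 : iteratedDeriv 2 (deriv ψ) = iteratedDeriv 3 ψ := (iteratedDeriv_succ' ..).symm
    have e2 : deriv (deriv ψ) = iteratedDeriv 2 ψ := by
      rw [iteratedDeriv_succ', iteratedDeriv_one]
    have e1 : deriv ψ = iteratedDeriv 1 ψ := (iteratedDeriv_one ..).symm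
    rw [e3, e2, e1]
  -- MemLp facts for the derivatives of ψ
  have hψm0 : MemLp ψ 2 (volume : Measure ℝ) := by
    have := hmem 0 (by norm_num); rwa [iteratedDeriv_zero] at this
  have hψm1 : MemLp (iteratedDeriv 1 ψ) 2 (volume : Measure ℝ) := hmem 1 (by norm_num)
  have hψm2 : MemLp (iteratedDeriv 2 ψ) 2 (volume : Measure ℝ) := hmem 2 (by norm_num)
  have hψm3 : MemLp (iteratedDeriv 3 ψ) 2 (volume : Measure ℝ) := hmem 3 (by norm_num)
  have hψm4 : MemLp (iteratedDeriv 4 ψ) 2 (volume : Measure ℝ) := hmem 4 (by norm_num)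
  -- m = M(deriv ψ) and its derivative md
  set m : ℝ → ℂ := MopC κ c Q (deriv ψ) with hm_def
  have hm2 : MemLp m 2 (volume : Measure ℝ) := by
    rw [hm_eq]
    exact ((memL2_mul_bounded hcQc hQc hψm3).add (memL2_mul_bounded hcQ1 hQ1 hψm2)).add
      (memL2_mul_bounded hcV hVb hψm1)
  set md : ℝ → ℂ := fun x =>
    (((deriv Q x : ℝ) : ℂ) * iteratedDeriv 3 ψ x + ((Q x - c : ℝ) : ℂ) * iteratedDeriv 4 ψ x)
    + (((iteratedDeriv 2 Q x : ℝ) : ℂ) * iteratedDeriv 2 ψ x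
        + ((deriv Q x : ℝ) : ℂ) * iteratedDeriv 3 ψ x)
    + (((iteratedDeriv 3 Q x - 3 * deriv Q x : ℝ) : ℂ) * iteratedDeriv 1 ψ x
        + ((Vfun κ c Q x : ℝ) : ℂ) * iteratedDeriv 2 ψ x) with hmd_def
  have hQR : ∀ x, HasDerivAt Q (deriv Q x) x := by
    intro x
    have := hQ.hasDerivAt_iter 0 x
    rwa [iteratedDeriv_zero, iteratedDeriv_one] at this
  have hcoef1 : ∀ x, HasDerivAt (fun y => ((Q y - c : ℝ) : ℂ)) ((deriv Q x : ℝ) : ℂ) x :=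
    fun x => ((hQR x).sub_const c).ofReal_comp
  have hcoef2 : ∀ x, HasDerivAt (fun y => ((deriv Q y : ℝ) : ℂ))
      ((iteratedDeriv 2 Q x : ℝ) : ℂ) x := by
    intro x
    have h1 := hQ.hasDerivAt_iter 1 x
    rw [iteratedDeriv_one] at h1
    exact h1.ofReal_comp
  have hcoefV : ∀ x, HasDerivAt (fun y => ((Vfun κ c Q y : ℝ) : ℂ))
      ((iteratedDeriv 3 Q x - 3 * deriv Q x : ℝ) : ℂ) x := by
    intro x
    have h1 : HasDerivAt (Vfun κ c Q) (iteratedDeriv 3 Q x - 3 * deriv Q x) x := by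
      unfold Vfun
      exact (((hQ.hasDerivAt_iter 2 x).sub ((hQR x).const_mul 3)).add_const c).sub_const (2 * κ)
    exact h1.ofReal_comp
  have hψd1 : ∀ x, HasDerivAt ψ (iteratedDeriv 1 ψ x) x := by
    intro x
    have := hψd 0 (by norm_num) x
    rwa [iteratedDeriv_zero] at this
  have hd12 : ∀ x, HasDerivAt (iteratedDeriv 1 ψ) (iteratedDeriv 2 ψ x) x := by
    intro x
    have h := hψd 1 (by norm_num) x
    norm_num at h
    rw [iteratedDeriv_one]
    exact h
  have hmd : ∀ x, HasDerivAt m (md x) x := by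
    intro x
    rw [hm_eq]
    exact (((hcoef1 x).mul (hψd 3 (by norm_num) x)).add
      ((hcoef2 x).mul (hψd 2 (by norm_num) x))).add ((hcoefV x).mul (hψd 1 (by norm_num) x))
  have hmd2 : MemLp md 2 (volume : Measure ℝ) := by
    rw [hmd_def]
    exact (((memL2_mul_bounded hcQ1 hQ1 hψm3).add (memL2_mul_bounded hcQc hQc hψm4)).add
      ((memL2_mul_bounded hcQ2 hK2 hψm2).add (memL2_mul_bounded hcQ1 hQ1 hψm3))).add
      ((memL2_mul_bounded (hcQ3.sub (continuous_const.mul hcQ1)) hVb' hψm1).add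
        (memL2_mul_bounded hcV hVb hψm2))
  have hLop_eq : LopC κ c Q ψ = fun x => -md x := by
    funext x
    show -deriv (MopC κ c Q (deriv ψ)) x = -md x
    rw [← hm_def, (hmd x).deriv]
  have hLmem : MemLp (LopC κ c Q ψ) 2 (volume : Measure ℝ) := by
    rw [hLop_eq]
    have : (fun x => -md x) = -md := rfl
    rw [this]
    exact hmd2.neg
  refine ⟨hLmem, ?_⟩
  -- the quadratic form identity
  set T : ℂ := ∫ x : ℝ, LopC κ c Q ψ x * (starRingEnd ℂ) (ψ x) with hT_def
  have hI1 : T = ∫ x : ℝ, m x * (starRingEnd ℂ) (iteratedDeriv 1 ψ x) := by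
    rw [hT_def]
    have e : (∫ x : ℝ, LopC κ c Q ψ x * (starRingEnd ℂ) (ψ x))
        = -∫ x : ℝ, md x * (starRingEnd ℂ) (ψ x) := by
      rw [← integral_neg]
      refine integral_congr_ae ?_
      filter_upwards with x
      rw [hLop_eq]
      ring
    rw [e, integral_by_parts hmd hψd1 hm2 hmd2 hψm0 hψm1, neg_neg]
  set r : ℝ → ℂ := fun x => ((Q x - c : ℝ) : ℂ) * iteratedDeriv 2 ψ x with hr_def
  set rd : ℝ → ℂ := fun x => ((deriv Q x : ℝ) : ℂ) * iteratedDeriv 2 ψ x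
      + ((Q x - c : ℝ) : ℂ) * iteratedDeriv 3 ψ x with hrd_def
  have hr : ∀ x, HasDerivAt r (rd x) x := by
    intro x
    rw [hr_def, hrd_def]
    exact (hcoef1 x).mul (hψd 2 (by norm_num) x)
  have hr2 : MemLp r 2 (volume : Measure ℝ) := by
    rw [hr_def]; exact memL2_mul_bounded hcQc hQc hψm2
  have hrd2 : MemLp rd 2 (volume : Measure ℝ) := by
    rw [hrd_def]
    exact (memL2_mul_bounded hcQ1 hQ1 hψm2).add (memL2_mul_bounded hcQc hQc hψm3)
  have hint_rd : Integrable (fun x => rd x * (starRingEnd ℂ) (iteratedDeriv 1 ψ x))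
      (volume : Measure ℝ) := integrable_mul2 hrd2 (memL2_conj hψm1)
  have hint_V : Integrable (fun x => (((Vfun κ c Q x : ℝ) : ℂ) * iteratedDeriv 1 ψ x)
      * (starRingEnd ℂ) (iteratedDeriv 1 ψ x)) (volume : Measure ℝ) :=
    integrable_mul2 (memL2_mul_bounded hcV hVb hψm1) (memL2_conj hψm1)
  have hsplit : T = (-∫ x : ℝ, r x * (starRingEnd ℂ) (iteratedDeriv 2 ψ x))
      + ∫ x : ℝ, (((Vfun κ c Q x : ℝ) : ℂ) * iteratedDeriv 1 ψ x)
          * (starRingEnd ℂ) (iteratedDeriv 1 ψ x) := by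
    rw [hI1]
    have e1 : (∫ x : ℝ, m x * (starRingEnd ℂ) (iteratedDeriv 1 ψ x))
        = ∫ x : ℝ, (rd x * (starRingEnd ℂ) (iteratedDeriv 1 ψ x)
            + (((Vfun κ c Q x : ℝ) : ℂ) * iteratedDeriv 1 ψ x)
              * (starRingEnd ℂ) (iteratedDeriv 1 ψ x)) := by
      refine integral_congr_ae ?_
      filter_upwards with x
      rw [hm_eq]
      simp only [hrd_def]
      push_cast
      ring
    rw [e1, integral_add hint_rd hint_V,
      integral_by_parts hr hd12 hr2 hrd2 hψm1 hψm2]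
  -- pass to real integrals
  have hreal2 : (∫ x : ℝ, r x * (starRingEnd ℂ) (iteratedDeriv 2 ψ x))
      = (((∫ x : ℝ, (Q x - c) * Complex.normSq (iteratedDeriv 2 ψ x)) : ℝ) : ℂ) := by
    rw [← integral_ofReal_c]
    refine integral_congr_ae ?_
    filter_upwards with x
    rw [hr_def]
    push_cast
    rw [mul_assoc, Complex.mul_conj]
  have hrealV : (∫ x : ℝ, (((Vfun κ c Q x : ℝ) : ℂ) * iteratedDeriv 1 ψ x)
        * (starRingEnd ℂ) (iteratedDeriv 1 ψ x))
      = (((∫ x : ℝ, Vfun κ c Q x * Complex.normSq (iteratedDeriv 1 ψ x)) : ℝ) : ℂ) := by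
    rw [← integral_ofReal_c]
    refine integral_congr_ae ?_
    filter_upwards with x
    push_cast
    rw [mul_assoc, Complex.mul_conj]
  set I2r : ℝ := ∫ x : ℝ, (Q x - c) * Complex.normSq (iteratedDeriv 2 ψ x) with hI2r_def
  set I1r : ℝ := ∫ x : ℝ, Vfun κ c Q x * Complex.normSq (iteratedDeriv 1 ψ x) with hI1r_def
  have hTre : T.re = -I2r + I1r := by
    rw [hsplit, hreal2, hrealV]
    simp
  -- norms
  set A : ℝ := L2normC ψ with hA_def
  set B : ℝ := L2normC (iteratedDeriv 1 ψ) with hB_def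
  set D : ℝ := L2normC (iteratedDeriv 2 ψ) with hD_def
  set G : ℝ := L2normC (LopC κ c Q ψ) with hG_def
  have hAn : 0 ≤ A := L2normC_nonneg _
  have hBn : 0 ≤ B := L2normC_nonneg _
  have hDn : 0 ≤ D := L2normC_nonneg _
  have hGn : 0 ≤ G := L2normC_nonneg _
  have hJ2 : (∫ x : ℝ, Complex.normSq (iteratedDeriv 2 ψ x)) = D ^ 2 := by
    rw [hD_def, sq_L2normC hψm2]
  have hJ1 : (∫ x : ℝ, Complex.normSq (iteratedDeriv 1 ψ x)) = B ^ 2 := by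
    rw [hB_def, sq_L2normC hψm1]
  -- integrability of the real integrands
  have hsq1 : Integrable (fun x => Complex.normSq (iteratedDeriv 1 ψ x)) (volume : Measure ℝ) :=
    integrable_normSq hψm1
  have hsq2 : Integrable (fun x => Complex.normSq (iteratedDeriv 2 ψ x)) (volume : Measure ℝ) :=
    integrable_normSq hψm2
  have hint2 : Integrable (fun x => (Q x - c) * Complex.normSq (iteratedDeriv 2 ψ x))
      (volume : Measure ℝ) := by
    refine hsq2.bdd_mul hcQc.aestronglyMeasurable (c := K0 + |c|) (ae_of_all _ fun x => ?_)
    rw [Real.norm_eq_abs]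
    exact hQc x
  have hintV : Integrable (fun x => Vfun κ c Q x * Complex.normSq (iteratedDeriv 1 ψ x))
      (volume : Measure ℝ) := by
    refine hsq1.bdd_mul hcV.aestronglyMeasurable (c := Bv) (ae_of_all _ fun x => ?_)
    rw [Real.norm_eq_abs]
    exact hVb x
  -- lower bound on the quadratic form
  have hI2r_le : I2r ≤ -(2 * κ) * D ^ 2 := by
    have h0 : I2r ≤ ∫ x : ℝ, -(2 * κ) * Complex.normSq (iteratedDeriv 2 ψ x) := by
      rw [hI2r_def]
      refine integral_mono hint2 (hsq2.const_mul _) (fun x => ?_)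
      have h1 : Q x - c ≤ -(2 * κ) := by have := hQ.ellip x; linarith
      exact mul_le_mul_of_nonneg_right h1 (Complex.normSq_nonneg _)
    rwa [integral_const_mul, hJ2] at h0
  have hI1r_ge : -(Bv) * B ^ 2 ≤ I1r := by
    have h0 : (∫ x : ℝ, -Bv * Complex.normSq (iteratedDeriv 1 ψ x)) ≤ I1r := by
      rw [hI1r_def]
      refine integral_mono (hsq1.const_mul _) hintV (fun x => ?_)
      have h1 : -Bv ≤ Vfun κ c Q x := by
        have := (abs_le.mp (hVb x)).1; linarith
      exact mul_le_mul_of_nonneg_right h1 (Complex.normSq_nonneg _)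
    rwa [integral_const_mul, hJ1] at h0
  -- upper bound : Cauchy-Schwarz
  have hup : T.re ≤ A * G := by
    refine (Complex.re_le_norm T).trans ?_
    rw [hT_def]
    exact norm_integral_mul_conj_le hLmem hψm0
  have hmain : 2 * κ * D ^ 2 ≤ A * G + Bv * B ^ 2 := by
    have h1 : 2 * κ * D ^ 2 ≤ -I2r := by linarith only [hI2r_le, hκ, sq_nonneg D]
    linarith only [h1, hTre, hup, hI1r_ge]
  -- interpolation : B² ≤ A * D
  have hBsq : B ^ 2 ≤ A * D := by
    have hparts := integral_by_parts hψd1 hd12 hψm0 hψm1 hψm1 hψm2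
    have hB2 : (∫ x : ℝ, iteratedDeriv 1 ψ x * (starRingEnd ℂ) (iteratedDeriv 1 ψ x))
        = ((B ^ 2 : ℝ) : ℂ) := by
      rw [← hJ1, ← integral_ofReal_c]
      refine integral_congr_ae ?_
      filter_upwards with x
      rw [Complex.mul_conj]
    rw [hB2] at hparts
    have hnorm : ‖((B ^ 2 : ℝ) : ℂ)‖ = B ^ 2 := by
      rw [Complex.norm_real, Real.norm_eq_abs, _root_.abs_of_nonneg (by positivity)]
    calc B ^ 2 = ‖((B ^ 2 : ℝ) : ℂ)‖ := hnorm.symm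
      _ = ‖∫ x : ℝ, ψ x * (starRingEnd ℂ) (iteratedDeriv 2 ψ x)‖ := by rw [hparts, norm_neg]
      _ ≤ D * A := norm_integral_mul_conj_le hψm0 hψm2
      _ = A * D := mul_comm _ _
  -- final algebra
  have hDsq : 4 * κ ^ 2 * D ^ 2 ≤ (2 * κ + Bv ^ 2) * (G + A) ^ 2 := by
    have hBvB : Bv * B ^ 2 ≤ Bv * (A * D) := mul_le_mul_of_nonneg_left hBsq hBvn
    have h1 : 2 * κ * D ^ 2 ≤ Bv * A * D + A * G := by
      linarith only [hmain, hBvB]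
    have h2 : (2 * κ) * (2 * κ * D ^ 2) ≤ (2 * κ) * (Bv * A * D + A * G) :=
      mul_le_mul_of_nonneg_left h1 (by linarith only [hκ])
    have h3 : 4 * κ ^ 2 * D ^ 2 ≤ Bv ^ 2 * A ^ 2 + 4 * κ * (A * G) := by
      nlinarith [h2, sq_nonneg (2 * κ * D - Bv * A)]
    nlinarith [h3, mul_nonneg hGn hAn, sq_nonneg Bv, hκ.le,
      mul_nonneg (mul_nonneg hGn hGn) (sq_nonneg Bv),
      mul_nonneg (mul_nonneg hGn hAn) (sq_nonneg Bv),
      mul_nonneg hκ.le (sq_nonneg G), mul_nonneg hκ.le (sq_nonneg A)]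
  have hD4 : D ^ 2 ≤ c₄ * (G + A) ^ 2 := by
    rw [hc₄_def, div_mul_eq_mul_div, le_div_iff₀ (by positivity : (0:ℝ) < 4 * κ ^ 2)]
    nlinarith [hDsq]
  have hDle : D ≤ Real.sqrt c₄ * (G + A) := by
    have h1 := Real.sqrt_le_sqrt hD4
    rw [Real.sqrt_sq hDn, Real.sqrt_mul hc₄n, Real.sqrt_sq (by positivity)] at h1
    exact h1
  have hBle : B ≤ Real.sqrt (Real.sqrt c₄) * (G + A) := by
    have h1 : B ^ 2 ≤ Real.sqrt c₄ * (G + A) ^ 2 := by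
      have h2 : A * D ≤ (G + A) * (Real.sqrt c₄ * (G + A)) := by
        refine mul_le_mul (by linarith) hDle hDn (by positivity)
      calc B ^ 2 ≤ A * D := hBsq
        _ ≤ (G + A) * (Real.sqrt c₄ * (G + A)) := h2
        _ = Real.sqrt c₄ * (G + A) ^ 2 := by ring
    have h3 := Real.sqrt_le_sqrt h1
    rwa [Real.sqrt_sq hBn, Real.sqrt_mul (Real.sqrt_nonneg _), Real.sqrt_sq (by positivity)] at h3
  have hHk : HkNormC 2 ψ = A + B + D := by
    rw [hA_def, hB_def, hD_def]
    unfold HkNormC L2normC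
    rw [Finset.sum_range_succ, Finset.sum_range_succ, Finset.sum_range_one, iteratedDeriv_zero]
  rw [hHk]
  rw [hK_def]
  nlinarith [hDle, hBle, Real.sqrt_nonneg c₄, Real.sqrt_nonneg (Real.sqrt c₄), hGn, hAn]

end KeyEstimate

section Glue

open Complex MeasureTheory Filter Topology

lemma L2normC_le_HkNormC (k : ℕ) (f : ℝ → ℂ) : L2normC f ≤ HkNormC k f := by
  unfold HkNormC L2normC
  have h0 : (eLpNorm f 2 (volume : Measure ℝ)).toReal
      = (eLpNorm (iteratedDeriv 0 f) 2 (volume : Measure ℝ)).toReal := by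
    rw [iteratedDeriv_zero]
  rw [h0]
  exact Finset.single_le_sum (f := fun j => (eLpNorm (iteratedDeriv j f) 2 volume).toReal)
    (fun j _ => ENNReal.toReal_nonneg) (Finset.mem_range.mpr (Nat.succ_pos k))

lemma HkNormC_zero (k : ℕ) : HkNormC k (0 : ℝ → ℂ) = 0 := by
  unfold HkNormC
  refine Finset.sum_eq_zero (fun j _ => ?_)
  rw [iteratedDeriv_zero_fun]
  simp [eLpNorm_zero]

lemma HkNormC_nonneg (k : ℕ) (f : ℝ → ℂ) : 0 ≤ HkNormC k f :=
  Finset.sum_nonneg (fun j _ => ENNReal.toReal_nonneg)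

lemma OddFunC_zero : OddFunC (0 : ℝ → ℂ) := fun x => by simp

lemma OddFunC.const_mul {f : ℝ → ℂ} (hf : OddFunC f) (a : ℂ) :
    OddFunC (fun x => a * f x) := fun x => by
  show a * f (-x) = -(a * f x)
  rw [hf x]; ring

lemma OddFunC.add {f g : ℝ → ℂ} (hf : OddFunC f) (hg : OddFunC g) :
    OddFunC (fun x => f x + g x) := fun x => by
  show f (-x) + g (-x) = -(f x + g x)
  rw [hf x, hg x]; ring

lemma memL2_of_InHkC {k : ℕ} {f : ℝ → ℂ} (hf : InHkC k f) :
    MemLp f 2 (volume : Measure ℝ) := by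
  have := hf.2 0 (Nat.zero_le _)
  rwa [iteratedDeriv_zero] at this

end Glue

/-- For the block operator `𝓛 = [[0, L],[1, 0]]` on
`X = L²_odd × H²_odd` with domain `Y = H²_odd × H⁴_odd`, a complex number `μ` belongs to
`ρ(𝓛)` if and only if `μ²` belongs to `ρ(L)`, and `μ` is an eigenvalue of `𝓛` if and
only if `μ²` is an eigenvalue of `L`. -/
theorem blockL_resolvent_and_eigenvalues (κ c : ℝ) (hκ : 0 < κ) (hc : 2 * κ < c)
    (Q : ℝ → ℝ) (hQ : CHProfile κ c Q) :
    ∀ μ : ℂ,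
      (InResolventBlock κ c Q μ ↔ InResolventLC κ c Q (μ ^ 2)) ∧
      (IsEigenvalueBlock κ c Q μ ↔ IsEigenvalueLC κ c Q (μ ^ 2)) := by
  intro μ
  obtain ⟨K, hKpos, hKey⟩ := key_estimate hκ hQ
  constructor
  · -- resolvent equivalence
    constructor
    · -- Block → LC
      rintro ⟨C, hC, hBlock⟩
      refine ⟨C, hC, fun f hfL2 hfodd => ?_⟩
      have hFX : InX (f, (0 : ℝ → ℂ)) := ⟨⟨hfL2, hfodd⟩, ⟨InHkC_zero, OddFunC_zero⟩⟩
      obtain ⟨⟨W, hWY, hWsolve, hWnorm⟩, huniq⟩ := hBlock (f, 0) hFX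
      constructor
      · refine ⟨W.2, hWY.2.1, hWY.2.2, ?_, ?_⟩
        · filter_upwards [hWsolve.1, hWsolve.2] with x e1 e2
          have e2' : W.1 x - μ * W.2 x = 0 := e2
          linear_combination e1 + μ * e2'
        · calc L2normC W.2 ≤ HkNormC 2 W.2 := L2normC_le_HkNormC 2 W.2
            _ ≤ XnormC W := by
                unfold XnormC
                have := L2normC_nonneg W.1
                linarith
            _ ≤ C * XnormC (f, (0 : ℝ → ℂ)) := hWnorm
            _ = C * L2normC f := by
                unfold XnormC
                simp only
                rw [HkNormC_zero]
                ring
      · -- uniqueness for L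
        rintro ψ φ ⟨hψ4, hψodd⟩ ⟨hφ4, hφodd⟩ hψeq hφeq
        have hWψ : InY (fun x => μ * ψ x, ψ) :=
          ⟨⟨(hψ4.of_le (by norm_num)).const_mul μ, hψodd.const_mul μ⟩, ⟨hψ4, hψodd⟩⟩
        have hWφ : InY (fun x => μ * φ x, φ) :=
          ⟨⟨(hφ4.of_le (by norm_num)).const_mul μ, hφodd.const_mul μ⟩, ⟨hφ4, hφodd⟩⟩
        have hSψ : SolvesBlock κ c Q μ (fun x => μ * ψ x, ψ) (f, (0 : ℝ → ℂ)) := by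
          constructor
          · filter_upwards [hψeq] with x e
            show LopC κ c Q ψ x - μ * (μ * ψ x) = f x
            linear_combination e
          · filter_upwards with x
            show μ * ψ x - μ * ψ x = 0
            ring
        have hSφ : SolvesBlock κ c Q μ (fun x => μ * φ x, φ) (f, (0 : ℝ → ℂ)) := by
          constructor
          · filter_upwards [hφeq] with x e
            show LopC κ c Q φ x - μ * (μ * φ x) = f x
            linear_combination e
          · filter_upwards with x
            show μ * φ x - μ * φ x = 0
            ring
        have := huniq _ _ hWψ hWφ hSψ hSφ
        exact congrArg Prod.snd this
    · -- LC → Block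
      rintro ⟨C, hC, hLC⟩
      set mu : ℝ := ‖μ‖ with hmu_def
      have hmun : 0 ≤ mu := norm_nonneg μ
      set C' : ℝ := mu * C * (1 + mu) + K * ((mu ^ 2 + 1) * C + 1) * (1 + mu) + 1 with hC'_def
      have hC'pos : 0 < C' := by positivity
      refine ⟨C', hC'pos, fun F hFX => ?_⟩
      obtain ⟨⟨hF1L2, hF1odd⟩, ⟨hF2Hk, hF2odd⟩⟩ := hFX
      have hF2L2 : MemLp F.2 2 (volume : Measure ℝ) := memL2_of_InHkC hF2Hk
      set f : ℝ → ℂ := fun x => F.1 x + μ * F.2 x with hf_def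
      have hfL2 : InL2C f := hF1L2.add (hF2L2.const_mul μ)
      have hfodd : OddFunC f := hF1odd.add (hF2odd.const_mul μ)
      obtain ⟨⟨ψ, hψ4, hψodd, hψeq, hψnorm⟩, hLuniq⟩ := hLC f hfL2 hfodd
      have hψL2 : MemLp ψ 2 (volume : Measure ℝ) := memL2_of_InHkC hψ4
      obtain ⟨hLmem, hHkBound⟩ := hKey ψ hψ4
      constructor
      · -- existence
        refine ⟨(fun x => μ * ψ x + F.2 x, ψ), ?_, ?_, ?_⟩
        · exact ⟨⟨((hψ4.of_le (by norm_num)).const_mul μ).add (hF2Hk),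
            (hψodd.const_mul μ).add hF2odd⟩, ⟨hψ4, hψodd⟩⟩
        · constructor
          · filter_upwards [hψeq] with x e
            have e' : LopC κ c Q ψ x - μ ^ 2 * ψ x = F.1 x + μ * F.2 x := by
              rw [hf_def] at e
              exact e
            show LopC κ c Q ψ x - μ * (μ * ψ x + F.2 x) = F.1 x
            linear_combination e'
          · filter_upwards with x
            show μ * ψ x + F.2 x - μ * ψ x = F.2 x
            ring
        · -- the norm bound
          have hG : L2normC (LopC κ c Q ψ) ≤ mu ^ 2 * L2normC ψ + L2normC f := by
            have hae : LopC κ c Q ψ =ᵐ[(volume : Measure ℝ)]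
                (fun x => μ ^ 2 * ψ x + f x) := by
              filter_upwards [hψeq] with x e
              linear_combination e
            rw [L2normC_congr_ae hae]
            refine (L2normC_add_le (hψL2.const_mul (μ ^ 2)) hfL2).trans ?_
            rw [L2normC_const_mul]
            simp [hmu_def, norm_pow]
          have hfn : L2normC f ≤ L2normC F.1 + mu * L2normC F.2 := by
            refine (L2normC_add_le hF1L2 (hF2L2.const_mul μ)).trans ?_
            rw [L2normC_const_mul]
          have hF2n : L2normC F.2 ≤ HkNormC 2 F.2 := L2normC_le_HkNormC 2 F.2
          set X : ℝ := XnormC F with hX_def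
          have hXeq : X = L2normC F.1 + HkNormC 2 F.2 := rfl
          have hXn : 0 ≤ X := by
            rw [hXeq]
            have := L2normC_nonneg F.1
            have := HkNormC_nonneg 2 F.2
            linarith
          have hF1n : L2normC F.1 ≤ X := by
            rw [hXeq]; have := HkNormC_nonneg 2 F.2; linarith
          have hF2n' : HkNormC 2 F.2 ≤ X := by
            rw [hXeq]; have := L2normC_nonneg F.1; linarith
          have hnfX : L2normC f ≤ (1 + mu) * X := by
            have h1 : mu * L2normC F.2 ≤ mu * X :=
              mul_le_mul_of_nonneg_left (hF2n.trans hF2n') hmun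
            have := hF1n
            nlinarith [hfn]
          have ha : L2normC ψ ≤ C * L2normC f := hψnorm
          have hga : L2normC (LopC κ c Q ψ) + L2normC ψ
              ≤ ((mu ^ 2 + 1) * C + 1) * L2normC f := by
            have h1 : (mu ^ 2 + 1) * L2normC ψ ≤ (mu ^ 2 + 1) * (C * L2normC f) :=
              mul_le_mul_of_nonneg_left ha (by positivity)
            nlinarith [hG]
          have hHk2 : HkNormC 2 ψ ≤ K * (((mu ^ 2 + 1) * C + 1) * ((1 + mu) * X)) := by
            refine hHkBound.trans ?_
            refine mul_le_mul_of_nonneg_left ?_ hKpos.le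
            refine hga.trans ?_
            exact mul_le_mul_of_nonneg_left hnfX (by positivity)
          have hW1 : L2normC (fun x => μ * ψ x + F.2 x)
              ≤ mu * (C * ((1 + mu) * X)) + X := by
            refine (L2normC_add_le (hψL2.const_mul μ) hF2L2).trans ?_
            rw [L2normC_const_mul]
            have h1 : L2normC ψ ≤ C * ((1 + mu) * X) :=
              ha.trans (mul_le_mul_of_nonneg_left hnfX hC.le)
            have h2 : mu * L2normC ψ ≤ mu * (C * ((1 + mu) * X)) :=
              mul_le_mul_of_nonneg_left h1 hmun
            have h3 : L2normC F.2 ≤ X := hF2n.trans hF2n'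
            linarith
          show L2normC (fun x => μ * ψ x + F.2 x) + HkNormC 2 ψ ≤ C' * X
          rw [hC'_def]
          nlinarith [hW1, hHk2]
      · -- uniqueness
        rintro W W' hYW hYW' hSW hSW'
        have hWeq : ∀ᵐ x ∂(volume : Measure ℝ), LopC κ c Q W.2 x - μ ^ 2 * W.2 x = f x := by
          filter_upwards [hSW.1, hSW.2] with x e1 e2
          simp only [hf_def]
          linear_combination e1 + μ * e2
        have hW'eq : ∀ᵐ x ∂(volume : Measure ℝ), LopC κ c Q W'.2 x - μ ^ 2 * W'.2 x = f x := by
          filter_upwards [hSW'.1, hSW'.2] with x e1 e2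
          simp only [hf_def]
          linear_combination e1 + μ * e2
        have h22 : W.2 = W'.2 :=
          hLuniq W.2 W'.2 ⟨hYW.2.1, hYW.2.2⟩ ⟨hYW'.2.1, hYW'.2.2⟩ hWeq hW'eq
        have h11 : W.1 = W'.1 := by
          have hae : W.1 =ᵐ[(volume : Measure ℝ)] W'.1 := by
            filter_upwards [hSW.2, hSW'.2] with x e1 e2
            have : W.2 x = W'.2 x := by rw [h22]
            linear_combination e1 - e2 + μ * this
          have hc1 : Continuous W.1 := hYW.1.1.1.continuous
          have hc2 : Continuous W'.1 := hYW'.1.1.1.continuous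
          exact (Continuous.ae_eq_iff_eq volume hc1 hc2).mp hae
        exact Prod.ext h11 h22
  · -- eigenvalue equivalence
    constructor
    · rintro ⟨W, hWY, hWne, hW1, hW2⟩
      refine ⟨W.2, hWY.2.1, hWY.2.2, ?_, ?_⟩
      · intro h20
        apply hWne
        have h1 : W.1 = 0 := by
          funext x
          rw [hW2 x, h20]
          simp
        have : W = (W.1, W.2) := rfl
        rw [this, h1, h20]
        rfl
      · intro x
        rw [hW1 x, hW2 x]
        ring
    · rintro ⟨ψ, hψ4, hψodd, hψne, hψeq⟩
      refine ⟨(fun x => μ * ψ x, ψ),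
        ⟨⟨(hψ4.of_le (by norm_num)).const_mul μ, hψodd.const_mul μ⟩, ⟨hψ4, hψodd⟩⟩,
        ?_, fun x => by rw [hψeq x]; ring, fun x => rfl⟩
      intro h0
      exact hψne (congrArg Prod.snd h0)
end Parts
end
end
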